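/- Let F be a labelled k-graph with b vertices and f > 0 edges and let λ > 0. There exist c > 0 and n₀ such that for all n ≥ n₀ the following holds. Let V be an n-vertex set and let ℱ be a family of λ·n^b ordered b-subsets of V. If p = p(n) satisfies Φ_F(n,p) ≥ c·n, then for H = H^{(k)}(n,p) on V: (i) with probability at least 1 − exp(−n), every induced subgraph of H on λ·n vertices contains a copy of F; (ii) with probability at least 1 − exp(−n), at least (λ/2)·n^b·p^f of the ordered b-sets in ℱ span labelled copies of F in H. -/

import Mathlib

open Finset Filter Topology

/-- All potential edges of a `k`-uniform hypergraph on `Fin n`. -/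
def allEdges (n k : ℕ) : Finset (Finset (Fin n)) :=
  Finset.powersetCard k Finset.univ

/-- Probability that the binomial random `k`-graph `H^{(k)}(n,p)` satisfies `P`. -/
noncomputable def rProb (n k : ℕ) (p : ℝ) (P : Finset (Finset (Fin n)) → Prop) : ℝ :=
  letI : DecidablePred P := fun E => Classical.propDecidable (P E)
  ∑ E ∈ (allEdges n k).powerset,
    if P E then p ^ E.card * (1 - p) ^ ((allEdges n k).card - E.card) else 0

/-- Expectation of `X` with respect to the binomial random `k`-graph `H^{(k)}(n,p)`. -/
noncomputable def rExp (n k : ℕ) (p : ℝ) (X : Finset (Finset (Fin n)) → ℝ) : ℝ :=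
  ∑ E ∈ (allEdges n k).powerset,
    p ^ E.card * (1 - p) ^ ((allEdges n k).card - E.card) * X E

/-- The degree of a vertex `v` in the hypergraph `H`. -/
def degH {n : ℕ} (H : Finset (Finset (Fin n))) (v : Fin n) : ℕ :=
  (H.filter fun e => v ∈ e).card

/-- The minimum vertex degree of `H`. -/
noncomputable def minDeg {n : ℕ} (H : Finset (Finset (Fin n))) : ℕ :=
  sInf { d : ℕ | ∃ v : Fin n, d = degH H v }

/-- `G` has a perfect matching. -/
def HasPerfectMatching {n : ℕ} (G : Finset (Finset (Fin n))) : Prop :=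
  ∃ M : Finset (Finset (Fin n)), M ⊆ G ∧
    (∀ e ∈ M, ∀ f ∈ M, e ≠ f → Disjoint e f) ∧ ∀ v : Fin n, ∃ e ∈ M, v ∈ e

/-- `f` is (the embedding of) a copy of `F` in `G`. -/
def IsCopyIn {b n : ℕ} (F : Finset (Finset (Fin b))) (G : Finset (Finset (Fin n)))
    (f : Fin b → Fin n) : Prop :=
  Function.Injective f ∧ ∀ e ∈ F, e.image f ∈ G

/-- The induced subgraph of `G` on `S` contains a copy of `F`. -/
def ContainsCopy {b n : ℕ} (F : Finset (Finset (Fin b))) (G : Finset (Finset (Fin n)))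
    (S : Finset (Fin n)) : Prop :=
  ∃ f : Fin b → Fin n, IsCopyIn F G f ∧ ∀ x, f x ∈ S

/-- `T` is a collection of pairwise vertex-disjoint copies of `F` in `G` whose vertex
sets partition `S`, i.e. an `F`-factor of the induced subgraph `G[S]`. -/
def IsFactorWitness {b n : ℕ} (F : Finset (Finset (Fin b))) (G : Finset (Finset (Fin n)))
    (S : Finset (Fin n)) (T : Finset (Fin b → Fin n)) : Prop :=
  (∀ f ∈ T, IsCopyIn F G f) ∧
  (∀ f ∈ T, ∀ g ∈ T, f ≠ g → Disjoint (Finset.univ.image f) (Finset.univ.image g)) ∧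
  T.biUnion (fun f => Finset.univ.image f) = S

/-- The induced subgraph `G[S]` has an `F`-factor. -/
def HasFactorOn {b n : ℕ} (F : Finset (Finset (Fin b))) (G : Finset (Finset (Fin n)))
    (S : Finset (Fin n)) : Prop :=
  ∃ T, IsFactorWitness F G S T

/-- `A` is an `(S,F)`-absorber in `H`. -/
def IsAbsorber {b n : ℕ} (F : Finset (Finset (Fin b))) (H : Finset (Finset (Fin n)))
    (S A : Finset (Fin n)) : Prop :=
  A.Nonempty ∧ Disjoint A S ∧ b ∣ A.card ∧ HasFactorOn F H A ∧ HasFactorOn F H (A ∪ S)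

/-- `A` is a simple `S`-absorber in `G`: `A` is a disjoint union of `b`-sets
`A₁, …, A_b`, with distinguished vertices `u i ∈ A i`, such that for some labelling
`s₁, …, s_b` of `S`, each `G[Aᵢ]` and each `G[{sᵢ} ∪ (Aᵢ \ {u i})]` contains a copy of
`F`, and `G[{u 1, …, u b}]` contains a copy of `F`. -/
def SimpleAbsorber {b n : ℕ} (F : Finset (Finset (Fin b))) (G : Finset (Finset (Fin n)))
    (S A : Finset (Fin n)) : Prop :=
  Disjoint A S ∧
  ∃ (Ai : Fin b → Finset (Fin n)) (u : Fin b → Fin n) (s : Fin b → Fin n),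
    Function.Injective s ∧ Finset.univ.image s = S ∧
    (∀ i, (Ai i).card = b) ∧ (∀ i, u i ∈ Ai i) ∧
    (∀ i j, i ≠ j → Disjoint (Ai i) (Ai j)) ∧
    Finset.univ.biUnion Ai = A ∧
    (∀ i, ContainsCopy F G (Ai i)) ∧
    (∀ i, ContainsCopy F G (insert (s i) ((Ai i).erase (u i)))) ∧
    ContainsCopy F G (Finset.univ.image u)

/-- `Φ_F(n,p) = min { n^{v_{F'}} p^{e_{F'}} : F' ⊆ F, e_{F'} > 0 }`, the minimum being
over all subgraphs `F'` of `F` (given by a vertex set `V' ⊆ Vset` and a nonempty edge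
set `E' ⊆ F` with all edges inside `V'`). -/
noncomputable def Phi {α : Type*} (Vset : Finset α) (F : Finset (Finset α)) (n : ℕ)
    (p : ℝ) : ℝ :=
  sInf { x : ℝ | ∃ (V' : Finset α) (E' : Finset (Finset α)), V' ⊆ Vset ∧ E' ⊆ F ∧
    E'.Nonempty ∧ (∀ e ∈ E', e ⊆ V') ∧ x = (n : ℝ) ^ V'.card * p ^ E'.card }

/-- `d*(F) = max { e_{F'}/(v_{F'} - 1) : F' ⊆ F, v_{F'} ≥ 2 }`. -/
noncomputable def dStar {α : Type*} (Vset : Finset α) (F : Finset (Finset α)) : ℝ :=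
  sSup { x : ℝ | ∃ (V' : Finset α) (E' : Finset (Finset α)), V' ⊆ Vset ∧ E' ⊆ F ∧
    (∀ e ∈ E', e ⊆ V') ∧ 2 ≤ V'.card ∧ x = (E'.card : ℝ) / ((V'.card : ℝ) - 1) }

/-- The number of embeddings of `F_v` (the spanning subgraph of `F` consisting of the
edges containing `v`) into `H` that map `v` to `w`. -/
noncomputable def embCount (k b : ℕ) (F : Finset (Finset (Fin b))) (v : Fin b) {n : ℕ}
    (H : Finset (Finset (Fin n))) (w : Fin n) : ℕ :=
  letI : DecidablePred (fun f : Fin b → Fin n =>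
      Function.Injective f ∧ f v = w ∧ ∀ e ∈ F, v ∈ e → e.image f ∈ H) :=
    fun f => Classical.propDecidable _
  (Finset.univ.filter fun f : Fin b → Fin n =>
    Function.Injective f ∧ f v = w ∧ ∀ e ∈ F, v ∈ e → e.image f ∈ H).card

/-- The set `Λ_{F,v}`. -/
def LambdaSet (k b : ℕ) (F : Finset (Finset (Fin b))) (v : Fin b) : Set ℝ :=
  { a : ℝ | 0 < a ∧ ∀ ε : ℝ, 0 < ε → ∃ ε' : ℝ, 0 < ε' ∧ ∃ n₀ : ℕ, ∀ n : ℕ, n₀ ≤ n →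
    ∀ H : Finset (Finset (Fin n)), (∀ e ∈ H, e.card = k) →
      (∀ u : Fin n, (a + ε) * ((n - 1).choose (k - 1) : ℝ) ≤ (degH H u : ℝ)) →
      ∀ w : Fin n, ε' * (n : ℝ) ^ (b - 1) ≤ (embCount k b F v H w : ℝ) }

/-- `α_F := min_{v ∈ V(F)} inf Λ_{F,v}`. -/
noncomputable def alphaF (k b : ℕ) (F : Finset (Finset (Fin b))) : ℝ :=
  ⨅ v : Fin b, sInf (LambdaSet k b F v)

/-- The `n`-vertex `k`-graph `H_n(A,B,η)`, whose edges are exactly the `k`-subsets of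
the vertex set meeting `A` (here `B` is the complement of `A`). -/
def Hgraph (n k : ℕ) (A : Finset (Fin n)) : Finset (Finset (Fin n)) :=
  (allEdges n k).filter fun e => (e ∩ A).Nonempty

/-- The link of `v` in `F`, a `(k-1)`-graph. -/
def linkAt {b : ℕ} (F : Finset (Finset (Fin b))) (v : Fin b) : Finset (Finset (Fin b)) :=
  (F.filter fun e => v ∈ e).image fun e => e.erase v

/-- The Turán number `ex(n, G)`: the maximum number of edges of a `k'`-graph on `n`
vertices containing no copy of `G`. -/
noncomputable def exNum (n k' : ℕ) {b : ℕ} (G : Finset (Finset (Fin b))) : ℕ :=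
  sSup { m : ℕ | ∃ H' : Finset (Finset (Fin n)), (∀ e ∈ H', e.card = k') ∧
    (¬ ∃ f : Fin b → Fin n, Function.Injective f ∧ ∀ e ∈ G, e.image f ∈ H') ∧
    m = H'.card }

/-- The number of ordered sets in `𝒜` spanning a labelled copy of `F` in `E`. -/
noncomputable def countSpan {s n : ℕ} (F : Finset (Finset (Fin s)))
    (𝒜 : Finset (Fin s → Fin n)) (E : Finset (Finset (Fin n))) : ℕ :=
  (𝒜.filter fun A => ∀ e ∈ F, e.image A ∈ E).card

namespace JansonAux


variable {n : ℕ}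

/-- Expectation over the product Bernoulli measure on subsets of ground set `T`. -/
noncomputable def EV (p : ℝ) (T : Finset (Finset (Fin n))) (g : Finset (Finset (Fin n)) → ℝ) : ℝ :=
  ∑ E ∈ T.powerset, p ^ E.card * (1 - p) ^ (T.card - E.card) * g E

lemma EV_one (p : ℝ) (T : Finset (Finset (Fin n))) : EV p T (fun _ => 1) = 1 := by
  have h := Finset.prod_add (fun _ : Finset (Fin n) => p) (fun _ => 1 - p) T
  simp only [Finset.prod_const] at h
  have : ∀ E ∈ T.powerset, p ^ E.card * (1 - p) ^ (T.card - E.card) * 1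
      = p ^ E.card * (1 - p) ^ (T \ E).card := by
    intro E hE
    rw [Finset.mem_powerset] at hE
    rw [Finset.card_sdiff_of_subset hE, mul_one]
  rw [EV, Finset.sum_congr rfl this, ← h]
  simp

lemma EV_nonneg {p : ℝ} (hp0 : 0 ≤ p) (hp1 : p ≤ 1) (T : Finset (Finset (Fin n)))
    {g : Finset (Finset (Fin n)) → ℝ} (hg : ∀ E ∈ T.powerset, 0 ≤ g E) : 0 ≤ EV p T g :=
  Finset.sum_nonneg fun E hE => mul_nonneg
    (mul_nonneg (pow_nonneg hp0 _) (pow_nonneg (by linarith) _)) (hg E hE)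

lemma EV_mono {p : ℝ} (hp0 : 0 ≤ p) (hp1 : p ≤ 1) (T : Finset (Finset (Fin n)))
    {g h : Finset (Finset (Fin n)) → ℝ} (hgh : ∀ E ∈ T.powerset, g E ≤ h E) :
    EV p T g ≤ EV p T h :=
  Finset.sum_le_sum fun E hE => mul_le_mul_of_nonneg_left (hgh E hE)
    (mul_nonneg (pow_nonneg hp0 _) (pow_nonneg (by linarith) _))

lemma EV_pos {p : ℝ} (hp0 : 0 ≤ p) (hp1 : p ≤ 1) (T : Finset (Finset (Fin n)))
    {g : Finset (Finset (Fin n)) → ℝ} (hg : ∀ E ∈ T.powerset, 0 < g E) : 0 < EV p T g := by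
  have h1 : (0:ℝ) < ∑ E ∈ T.powerset, p ^ E.card * (1 - p) ^ (T.card - E.card) := by
    have := EV_one (n := n) p T
    simp only [EV, mul_one] at this
    rw [this]; norm_num
  obtain ⟨E₀, hE₀, hw⟩ : ∃ E₀ ∈ T.powerset, 0 < p ^ E₀.card * (1 - p) ^ (T.card - E₀.card) := by
    by_contra hcon
    push_neg at hcon
    have : ∑ E ∈ T.powerset, p ^ E.card * (1 - p) ^ (T.card - E.card) ≤ 0 :=
      Finset.sum_nonpos fun E hE => hcon E hE
    linarith
  calc (0:ℝ) < p ^ E₀.card * (1 - p) ^ (T.card - E₀.card) * g E₀ :=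
        mul_pos hw (hg E₀ hE₀)
    _ ≤ EV p T g := Finset.single_le_sum (f := fun E => p ^ E.card * (1 - p) ^ (T.card - E.card) * g E)
        (fun E hE => mul_nonneg (mul_nonneg (pow_nonneg hp0 _) (pow_nonneg (by linarith) _))
          (hg E hE).le) hE₀

lemma EV_congr (p : ℝ) (T : Finset (Finset (Fin n))) {g h : Finset (Finset (Fin n)) → ℝ}
    (hgh : ∀ E ∈ T.powerset, g E = h E) : EV p T g = EV p T h :=
  Finset.sum_congr rfl fun E hE => by rw [hgh E hE]

lemma EV_sum (p : ℝ) (T : Finset (Finset (Fin n))) {ι : Type*} (s : Finset ι)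
    (g : ι → Finset (Finset (Fin n)) → ℝ) :
    EV p T (fun E => ∑ i ∈ s, g i E) = ∑ i ∈ s, EV p T (g i) := by
  simp only [EV, Finset.mul_sum]
  exact Finset.sum_comm

lemma EV_linear (p : ℝ) (T : Finset (Finset (Fin n))) (a c : ℝ)
    (g : Finset (Finset (Fin n)) → ℝ) :
    EV p T (fun E => a - c * g E) = a - c * EV p T g := by
  have h1 := EV_one (n := n) p T
  simp only [EV, mul_one] at h1
  simp only [EV, mul_sub]
  rw [Finset.sum_sub_distrib]
  congr 1
  · have : ∀ E ∈ T.powerset, p ^ E.card * (1 - p) ^ (T.card - E.card) * a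
        = a * (p ^ E.card * (1 - p) ^ (T.card - E.card)) := by intros; ring
    rw [Finset.sum_congr rfl this, ← Finset.mul_sum, h1, mul_one]
  · rw [Finset.mul_sum]
    apply Finset.sum_congr rfl; intros; ring

/-- Conditioning on the up-set `R ⊆ E`. -/
lemma EV_cond (p : ℝ) {T R : Finset (Finset (Fin n))} (hRT : R ⊆ T)
    (g : Finset (Finset (Fin n)) → ℝ) :
    EV p T (fun E => if R ⊆ E then g E else 0)
      = p ^ R.card * EV p (T \ R) (fun E' => g (E' ∪ R)) := by
  rw [EV]
  simp only [mul_ite, mul_zero]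
  rw [← Finset.sum_filter, EV, Finset.mul_sum]
  refine Finset.sum_nbij' (fun E => E \ R) (fun E' => E' ∪ R) ?_ ?_ ?_ ?_ ?_
  · intro E hE
    simp only [Finset.mem_filter, Finset.mem_powerset] at hE ⊢
    exact Finset.sdiff_subset_sdiff hE.1 (Finset.Subset.refl R)
  · intro E' hE'
    simp only [Finset.mem_filter, Finset.mem_powerset] at hE' ⊢
    constructor
    · exact Finset.union_subset (hE'.trans (Finset.sdiff_subset)) hRT
    · exact Finset.subset_union_right
  · intro E hE
    simp only [Finset.mem_filter, Finset.mem_powerset] at hE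
    exact Finset.sdiff_union_of_subset hE.2
  · intro E' hE'
    simp only [Finset.mem_powerset] at hE'
    exact Finset.union_sdiff_cancel_right (Finset.disjoint_of_subset_left hE' Finset.sdiff_disjoint)
  · intro E hE
    simp only [Finset.mem_filter, Finset.mem_powerset] at hE
    obtain ⟨hET, hRE⟩ := hE
    have hdisj : Disjoint (E \ R) R := Finset.sdiff_disjoint
    have hcard : E.card = (E \ R).card + R.card := by
      rw [← Finset.card_union_of_disjoint hdisj, Finset.sdiff_union_of_subset hRE]
    have hcard2 : T.card - E.card = (T \ R).card - (E \ R).card := by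
      have h1 : R.card ≤ T.card := Finset.card_le_card hRT
      have h2 : E.card ≤ T.card := Finset.card_le_card hET
      have h3 : (T \ R).card = T.card - R.card := Finset.card_sdiff_of_subset hRT
      omega
    rw [hcard2, hcard, Finset.sdiff_union_of_subset hRE, pow_add]
    ring

/-- If `g` ignores the coordinates in `R`, we may integrate over the smaller ground set. -/
lemma EV_restrict (p : ℝ) {T R : Finset (Finset (Fin n))} (hRT : R ⊆ T)
    {g : Finset (Finset (Fin n)) → ℝ} (hg : ∀ E, g (E \ R) = g E) :
    EV p T g = EV p (T \ R) g := by
  have sumone : ∑ D ∈ R.powerset, p ^ D.card * (1 - p) ^ (R.card - D.card) = 1 := by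
    have := EV_one (n := n) p R
    simpa [EV] using this
  have step1 : EV p T g = ∑ q ∈ (T \ R).powerset ×ˢ R.powerset,
      p ^ (q.1.card + q.2.card) * (1 - p) ^ (((T \ R).card - q.1.card) + (R.card - q.2.card))
        * g q.1 := by
    rw [EV]
    refine Finset.sum_nbij' (fun E => (E \ R, E ∩ R)) (fun q => q.1 ∪ q.2) ?_ ?_ ?_ ?_ ?_
    · intro E hE
      simp only [Finset.mem_powerset, Finset.mem_product] at hE ⊢
      exact ⟨Finset.sdiff_subset_sdiff hE (Finset.Subset.refl R), Finset.inter_subset_right⟩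
    · intro q hq
      simp only [Finset.mem_powerset, Finset.mem_product] at hq ⊢
      exact Finset.union_subset (hq.1.trans Finset.sdiff_subset) (hq.2.trans hRT)
    · intro E _
      exact Finset.sdiff_union_inter E R
    · intro q hq
      simp only [Finset.mem_powerset, Finset.mem_product] at hq
      have hd1 : Disjoint q.1 R :=
        Finset.disjoint_of_subset_left hq.1 Finset.sdiff_disjoint
      have c1 : (q.1 ∪ q.2) \ R = q.1 := by
        rw [Finset.union_sdiff_distrib, Finset.sdiff_eq_self_of_disjoint hd1,
          Finset.sdiff_eq_empty_iff_subset.2 hq.2, Finset.union_empty]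
      have c2 : (q.1 ∪ q.2) ∩ R = q.2 := by
        rw [Finset.union_inter_distrib_right,
          (Finset.inter_eq_left.2 hq.2 : q.2 ∩ R = q.2),
          Finset.disjoint_iff_inter_eq_empty.1 hd1, Finset.empty_union]
      exact Prod.ext c1 c2
    · intro E hE
      simp only [Finset.mem_powerset] at hE
      have hd : Disjoint (E \ R) (E ∩ R) :=
        Finset.disjoint_of_subset_right Finset.inter_subset_right Finset.sdiff_disjoint
      have hcard : E.card = (E \ R).card + (E ∩ R).card := by
        rw [← Finset.card_union_of_disjoint hd, Finset.sdiff_union_inter]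
      have hc2 : T.card - E.card = ((T \ R).card - (E \ R).card) + (R.card - (E ∩ R).card) := by
        have h1 : (T \ R).card = T.card - R.card := Finset.card_sdiff_of_subset hRT
        have h2 : E.card ≤ T.card := Finset.card_le_card hE
        have h3 : (E \ R).card ≤ (T \ R).card :=
          Finset.card_le_card (Finset.sdiff_subset_sdiff hE (Finset.Subset.refl R))
        have h4 : (E ∩ R).card ≤ R.card := Finset.card_le_card Finset.inter_subset_right
        have h5 : R.card ≤ T.card := Finset.card_le_card hRT
        omega
      have hgE : g E = g (E \ R) := (hg E).symm
      dsimp only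
      rw [hgE, hc2, hcard]
  rw [step1, Finset.sum_product, EV]
  apply Finset.sum_congr rfl
  intro E' hE'
  have : ∑ D ∈ R.powerset,
      p ^ (E'.card + D.card) * (1 - p) ^ (((T \ R).card - E'.card) + (R.card - D.card)) * g E'
      = (p ^ E'.card * (1 - p) ^ ((T \ R).card - E'.card) * g E')
        * ∑ D ∈ R.powerset, p ^ D.card * (1 - p) ^ (R.card - D.card) := by
    rw [Finset.mul_sum]
    apply Finset.sum_congr rfl
    intro D _
    rw [pow_add, pow_add]
    ring
  rw [this, sumone, mul_one]

/-- Harris/FKG inequality for two "antitone" nonnegative observables. -/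
lemma EV_fkg {p : ℝ} (hp0 : 0 ≤ p) (hp1 : p ≤ 1) (T : Finset (Finset (Fin n)))
    {g h : Finset (Finset (Fin n)) → ℝ} (hg0 : ∀ E, 0 ≤ g E) (hh0 : ∀ E, 0 ≤ h E)
    (hganti : ∀ A B : Finset (Finset (Fin n)), A ⊆ B → g B ≤ g A)
    (hhanti : ∀ A B : Finset (Finset (Fin n)), A ⊆ B → h B ≤ h A) :
    EV p T g * EV p T h ≤ EV p T (fun E => g E * h E) := by
  classical
  set w : Finset (Finset (Fin n)) → ℝ :=
    fun E => if E ⊆ T then p ^ E.card * (1 - p) ^ (T.card - E.card) else 0 with hw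
  have hw0 : ∀ E, 0 ≤ w E := by
    intro E
    rw [hw]
    dsimp only
    split
    · exact mul_nonneg (pow_nonneg hp0 _) (pow_nonneg (by linarith) _)
    · exact le_refl 0
  have hwsum : ∀ (G : Finset (Finset (Fin n)) → ℝ),
      ∑ E : Finset (Finset (Fin n)), w E * G E = EV p T G := by
    intro G
    rw [EV]
    rw [← Finset.sum_filter_add_sum_filter_not Finset.univ (fun E => E ⊆ T)]
    have h2 : ∀ E ∈ Finset.univ.filter (fun E : Finset (Finset (Fin n)) => ¬ E ⊆ T),
        w E * G E = 0 := by
      intro E hE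
      simp only [Finset.mem_filter] at hE
      rw [hw]
      simp [hE.2]
    rw [Finset.sum_eq_zero h2, add_zero]
    have h3 : Finset.univ.filter (fun E : Finset (Finset (Fin n)) => E ⊆ T) = T.powerset := by
      ext E; simp [Finset.mem_powerset]
    rw [h3]
    apply Finset.sum_congr rfl
    intro E hE
    rw [Finset.mem_powerset] at hE
    rw [hw]
    simp [hE]
  have hsuper : ∀ A B : Finset (Finset (Fin n)), w A * w B ≤ w (A ∪ B) * w (A ∩ B) := by
    intro A B
    by_cases hA : A ⊆ T
    · by_cases hB : B ⊆ T
      · have hAB : A ∪ B ⊆ T := Finset.union_subset hA hB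
        have hABi : A ∩ B ⊆ T := Finset.inter_subset_left.trans hA
        rw [hw]
        simp only [if_pos hA, if_pos hB, if_pos hAB, if_pos hABi]
        have hc : (A ∩ B).card + (A ∪ B).card = A.card + B.card :=
          Finset.card_inter_add_card_union A B
        have h1 : A.card ≤ T.card := Finset.card_le_card hA
        have h2 : B.card ≤ T.card := Finset.card_le_card hB
        have h3 : (A ∪ B).card ≤ T.card := Finset.card_le_card hAB
        have h4 : (A ∩ B).card ≤ T.card := Finset.card_le_card hABi
        have e1 : A.card + B.card = (A ∪ B).card + (A ∩ B).card := by omega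
        have e2 : (T.card - A.card) + (T.card - B.card)
            = (T.card - (A ∪ B).card) + (T.card - (A ∩ B).card) := by omega
        refine le_of_eq ?_
        calc p ^ A.card * (1 - p) ^ (T.card - A.card) * (p ^ B.card * (1 - p) ^ (T.card - B.card))
            = p ^ (A.card + B.card) * (1 - p) ^ ((T.card - A.card) + (T.card - B.card)) := by
              rw [pow_add, pow_add]; ring
          _ = p ^ ((A ∪ B).card + (A ∩ B).card)
              * (1 - p) ^ ((T.card - (A ∪ B).card) + (T.card - (A ∩ B).card)) := by rw [e1, e2]
          _ = p ^ (A ∪ B).card * (1 - p) ^ (T.card - (A ∪ B).card)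
              * (p ^ (A ∩ B).card * (1 - p) ^ (T.card - (A ∩ B).card)) := by
              rw [pow_add, pow_add]; ring
      · have : w B = 0 := by rw [hw]; simp [hB]
        rw [this, mul_zero]
        exact mul_nonneg (hw0 _) (hw0 _)
    · have : w A = 0 := by rw [hw]; simp [hA]
      rw [this, zero_mul]
      exact mul_nonneg (hw0 _) (hw0 _)
  -- apply FKG on the order dual
  have key := fkg (α := (Finset (Finset (Fin n)))ᵒᵈ) (β := ℝ)
    (fun a => g (OrderDual.ofDual a)) (fun a => h (OrderDual.ofDual a))
    (fun a => w (OrderDual.ofDual a))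
    (fun a => hw0 _) (fun a => hg0 _) (fun a => hh0 _)
    (fun a b hab => hganti _ _ hab) (fun a b hab => hhanti _ _ hab)
    (fun a b => hsuper (OrderDual.ofDual a) (OrderDual.ofDual b))
  have hsum1 : (∑ a : (Finset (Finset (Fin n)))ᵒᵈ, w (OrderDual.ofDual a)) = 1 := by
    have := hwsum (fun _ => 1)
    simp only [mul_one] at this
    rw [← EV_one (n := n) p T, ← this]
    exact Fintype.sum_equiv OrderDual.ofDual _ _ (fun _ => rfl)
  have conv : ∀ (G : Finset (Finset (Fin n)) → ℝ),
      (∑ a : (Finset (Finset (Fin n)))ᵒᵈ, w (OrderDual.ofDual a) * G (OrderDual.ofDual a))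
        = EV p T G := by
    intro G
    rw [← hwsum G]
    exact Fintype.sum_equiv OrderDual.ofDual _ _ (fun _ => rfl)
  calc EV p T g * EV p T h
      = (∑ a : (Finset (Finset (Fin n)))ᵒᵈ, w (OrderDual.ofDual a) * g (OrderDual.ofDual a))
        * (∑ a : (Finset (Finset (Fin n)))ᵒᵈ, w (OrderDual.ofDual a) * h (OrderDual.ofDual a)) := by
        rw [conv g, conv h]
    _ ≤ (∑ a : (Finset (Finset (Fin n)))ᵒᵈ, w (OrderDual.ofDual a))
        * (∑ a : (Finset (Finset (Fin n)))ᵒᵈ,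
            w (OrderDual.ofDual a) * (g (OrderDual.ofDual a) * h (OrderDual.ofDual a))) := key
    _ = EV p T (fun E => g E * h E) := by
        rw [hsum1, conv (fun E => g E * h E), one_mul]


lemma EV_const_mul (p : ℝ) (T : Finset (Finset (Fin n))) (c : ℝ)
    (g : Finset (Finset (Fin n)) → ℝ) :
    EV p T (fun E => c * g E) = c * EV p T g := by
  simp only [EV, Finset.mul_sum]
  apply Finset.sum_congr rfl; intros; ring

section Janson

variable {p : ℝ} {ι : Type} [Fintype ι]

/-- The number of indices whose edge set is present, as a real. -/
noncomputable def XC [DecidableEq ι] (R : ι → Finset (Finset (Fin n))) (E : Finset (Finset (Fin n))) : ℝ :=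
  ((Finset.univ.filter fun j => R j ⊆ E).card : ℝ)

lemma per_index [DecidableEq ι] (hp0 : 0 ≤ p) (hp1 : p ≤ 1) (R : ι → Finset (Finset (Fin n)))
    (T : Finset (Finset (Fin n))) (hR : ∀ j, R j ⊆ T) (i : ι) {s : ℝ} (hs : 0 ≤ s) :
    (p ^ (R i).card
      - s * ∑ j ∈ Finset.univ.filter (fun j => ¬ Disjoint (R i) (R j)), p ^ ((R i ∪ R j).card))
      * EV p T (fun E => Real.exp (-(s * XC R E)))
    ≤ EV p T (fun E => (if R i ⊆ E then 1 else 0) * Real.exp (-(s * XC R E))) := by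
  set D : Finset ι := Finset.univ.filter (fun j => ¬ Disjoint (R i) (R j)) with hD
  set Dc : Finset ι := Finset.univ.filter (fun j => Disjoint (R i) (R j)) with hDc
  set Z : Finset (Finset (Fin n)) → ℝ := fun E => ((D.filter fun j => R j ⊆ E).card : ℝ) with hZ
  set Y : Finset (Finset (Fin n)) → ℝ := fun E => ((Dc.filter fun j => R j ⊆ E).card : ℝ) with hY
  have hXZY : ∀ E, XC R E = Z E + Y E := by
    intro E
    rw [hZ, hY, XC]
    simp only
    rw [← Nat.cast_add]
    norm_cast
    rw [hD, hDc, Finset.filter_filter, Finset.filter_filter]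
    rw [← Finset.card_filter_add_card_filter_not
      (s := Finset.univ.filter fun j => R j ⊆ E) (p := fun j => ¬ Disjoint (R i) (R j))]
    congr 1
    · rw [Finset.filter_filter]
      congr 1
      apply Finset.filter_congr
      intro j _
      constructor
      · rintro ⟨h1, h2⟩; exact ⟨h2, h1⟩
      · rintro ⟨h1, h2⟩; exact ⟨h2, h1⟩
    · rw [Finset.filter_filter]
      congr 1
      apply Finset.filter_congr
      intro j _
      constructor
      · rintro ⟨h1, h2⟩; exact ⟨not_not.1 h2, h1⟩
      · rintro ⟨h1, h2⟩; exact ⟨h2, not_not.2 h1⟩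
  have hZmono : ∀ A B : Finset (Finset (Fin n)), A ⊆ B → Z A ≤ Z B := by
    intro A B hAB
    rw [hZ]
    simp only [Nat.cast_le]
    apply Finset.card_le_card
    apply Finset.monotone_filter_right
    intro j _ hj
    exact hj.trans hAB
  have hYmono : ∀ A B : Finset (Finset (Fin n)), A ⊆ B → Y A ≤ Y B := by
    intro A B hAB
    rw [hY]
    simp only [Nat.cast_le]
    apply Finset.card_le_card
    apply Finset.monotone_filter_right
    intro j _ hj
    exact hj.trans hAB
  have hZ0 : ∀ E, 0 ≤ Z E := fun E => Nat.cast_nonneg _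
  have hY0 : ∀ E, 0 ≤ Y E := fun E => Nat.cast_nonneg _
  have hYX : ∀ E, Y E ≤ XC R E := by intro E; rw [hXZY E]; linarith [hZ0 E]
  set U' : Finset (Finset (Fin n)) := T \ R i with hU'
  -- Step 1: condition on `R i ⊆ E`
  have step1 : EV p T (fun E => (if R i ⊆ E then 1 else 0) * Real.exp (-(s * XC R E)))
      = p ^ (R i).card
        * EV p U' (fun E' => Real.exp (-(s * Z (E' ∪ R i))) * Real.exp (-(s * Y (E' ∪ R i)))) := by
    rw [← EV_cond p (hR i) (fun E => Real.exp (-(s * Z E)) * Real.exp (-(s * Y E)))]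
    apply EV_congr
    intro E _
    by_cases hRE : R i ⊆ E
    · simp only [hRE, if_true, one_mul, ← Real.exp_add]
      congr 1
      rw [hXZY E]
      ring
    · simp [hRE]
  -- Step 2: FKG
  have hZanti : ∀ A B : Finset (Finset (Fin n)), A ⊆ B →
      Real.exp (-(s * Z (B ∪ R i))) ≤ Real.exp (-(s * Z (A ∪ R i))) := by
    intro A B hAB
    apply Real.exp_le_exp.2
    apply neg_le_neg
    exact mul_le_mul_of_nonneg_left (hZmono _ _ (Finset.union_subset_union_left hAB)) hs
  have hYanti : ∀ A B : Finset (Finset (Fin n)), A ⊆ B →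
      Real.exp (-(s * Y (B ∪ R i))) ≤ Real.exp (-(s * Y (A ∪ R i))) := by
    intro A B hAB
    apply Real.exp_le_exp.2
    apply neg_le_neg
    exact mul_le_mul_of_nonneg_left (hYmono _ _ (Finset.union_subset_union_left hAB)) hs
  have step2 : EV p U' (fun E' => Real.exp (-(s * Z (E' ∪ R i))))
        * EV p U' (fun E' => Real.exp (-(s * Y (E' ∪ R i))))
      ≤ EV p U' (fun E' => Real.exp (-(s * Z (E' ∪ R i))) * Real.exp (-(s * Y (E' ∪ R i)))) :=
    EV_fkg hp0 hp1 U' (fun E => (Real.exp_pos _).le) (fun E => (Real.exp_pos _).le) hZanti hYanti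
  -- Step 3: the `Y` factor dominates `φ`
  have hYirrel : ∀ E', Y (E' ∪ R i) = Y E' := by
    intro E'
    rw [hY]
    simp only [Nat.cast_inj]
    congr 1
    apply Finset.filter_congr
    intro j hj
    rw [hDc, Finset.mem_filter] at hj
    constructor
    · intro hsub x hx
      rcases Finset.mem_union.1 (hsub hx) with h | h
      · exact h
      · exact absurd (Finset.mem_inter.2 ⟨h, hx⟩)
          (by rw [Finset.disjoint_iff_inter_eq_empty.1 hj.2]; exact Finset.notMem_empty x)
    · intro hsub
      exact hsub.trans Finset.subset_union_left
  have hYdrop : ∀ E : Finset (Finset (Fin n)), Y (E \ R i) = Y E := by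
    intro E
    rw [hY]
    simp only [Nat.cast_inj]
    congr 1
    apply Finset.filter_congr
    intro j hj
    rw [hDc, Finset.mem_filter] at hj
    constructor
    · intro hsub
      exact hsub.trans Finset.sdiff_subset
    · intro hsub x hx
      rw [Finset.mem_sdiff]
      refine ⟨hsub hx, fun hxi => ?_⟩
      exact absurd (Finset.mem_inter.2 ⟨hxi, hx⟩)
        (by rw [Finset.disjoint_iff_inter_eq_empty.1 hj.2]; exact Finset.notMem_empty x)
  have step3 : EV p T (fun E => Real.exp (-(s * XC R E)))
      ≤ EV p U' (fun E' => Real.exp (-(s * Y (E' ∪ R i)))) := by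
    have e1 : EV p U' (fun E' => Real.exp (-(s * Y (E' ∪ R i))))
        = EV p U' (fun E' => Real.exp (-(s * Y E'))) := by
      apply EV_congr; intro E' _; rw [hYirrel E']
    have e2 : EV p T (fun E => Real.exp (-(s * Y E)))
        = EV p U' (fun E' => Real.exp (-(s * Y E'))) := by
      apply EV_restrict p (hR i)
      intro E
      rw [hYdrop E]
    rw [e1, ← e2]
    apply EV_mono hp0 hp1
    intro E _
    apply Real.exp_le_exp.2
    apply neg_le_neg
    exact mul_le_mul_of_nonneg_left (hYX E) hs
  -- Step 4: the `Z` factor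
  have step4 : 1 - s * ∑ j ∈ D, p ^ ((R j \ R i).card)
      ≤ EV p U' (fun E' => Real.exp (-(s * Z (E' ∪ R i)))) := by
    have e1 : EV p U' (fun E' => 1 - s * Z (E' ∪ R i))
        ≤ EV p U' (fun E' => Real.exp (-(s * Z (E' ∪ R i)))) := by
      apply EV_mono hp0 hp1
      intro E' _
      have := Real.add_one_le_exp (-(s * Z (E' ∪ R i)))
      linarith
    have e2 : EV p U' (fun E' => 1 - s * Z (E' ∪ R i))
        = 1 - s * EV p U' (fun E' => Z (E' ∪ R i)) := EV_linear p U' 1 s _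
    have e3 : EV p U' (fun E' => Z (E' ∪ R i)) = ∑ j ∈ D, p ^ ((R j \ R i).card) := by
      have hZrep : ∀ E', Z (E' ∪ R i) = ∑ j ∈ D, (if R j \ R i ⊆ E' then (1:ℝ) else 0) := by
        intro E'
        rw [hZ]
        simp only
        rw [Finset.card_filter]
        push_cast
        apply Finset.sum_congr rfl
        intro j _
        have : R j ⊆ E' ∪ R i ↔ R j \ R i ⊆ E' := by
          constructor
          · intro h x hx
            rw [Finset.mem_sdiff] at hx
            rcases Finset.mem_union.1 (h hx.1) with h' | h'
            · exact h'
            · exact absurd h' hx.2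
          · intro h x hx
            by_cases hxi : x ∈ R i
            · exact Finset.mem_union.2 (Or.inr hxi)
            · exact Finset.mem_union.2 (Or.inl (h (Finset.mem_sdiff.2 ⟨hx, hxi⟩)))
        by_cases hcase : R j ⊆ E' ∪ R i
        · rw [if_pos hcase, if_pos (this.1 hcase)]
        · rw [if_neg hcase, if_neg (fun hc => hcase (this.2 hc))]
      have : EV p U' (fun E' => Z (E' ∪ R i))
          = ∑ j ∈ D, EV p U' (fun E' => if R j \ R i ⊆ E' then (1:ℝ) else 0) := by
        rw [← EV_sum]
        apply EV_congr
        intro E' _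
        exact hZrep E'
      rw [this]
      apply Finset.sum_congr rfl
      intro j _
      have hsub : R j \ R i ⊆ U' := by
        rw [hU']
        exact Finset.sdiff_subset_sdiff (hR j) (Finset.Subset.refl _)
      have := EV_cond (n := n) p hsub (fun _ => (1:ℝ))
      rw [this, EV_one, mul_one]
    rw [e2, e3] at e1
    exact e1
  -- combine
  set q : ℝ := 1 - s * ∑ j ∈ D, p ^ ((R j \ R i).card) with hq
  have hprq : p ^ (R i).card * q
      = p ^ (R i).card - s * ∑ j ∈ D, p ^ ((R i ∪ R j).card) := by
    rw [hq, mul_sub, mul_one, Finset.mul_sum, Finset.mul_sum]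
    congr 1
    rw [Finset.mul_sum]
    apply Finset.sum_congr rfl
    intro j _
    rw [mul_left_comm, ← pow_add]
    congr 2
    have h1 : (R j \ R i).card + (R i).card = (R j ∪ R i).card :=
      Finset.card_sdiff_add_card (R j) (R i)
    have h2 : (R j ∪ R i) = (R i ∪ R j) := Finset.union_comm _ _
    rw [h2] at h1
    omega
  have hφ0 : 0 ≤ EV p T (fun E => Real.exp (-(s * XC R E))) :=
    EV_nonneg hp0 hp1 T (fun E _ => (Real.exp_pos _).le)
  have hEV1nn : 0 ≤ EV p U' (fun E' => Real.exp (-(s * Z (E' ∪ R i)))) :=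
    EV_nonneg hp0 hp1 U' (fun E _ => (Real.exp_pos _).le)
  have hRHSnn : 0 ≤ EV p U' (fun E' => Real.exp (-(s * Z (E' ∪ R i))) * Real.exp (-(s * Y (E' ∪ R i)))) :=
    EV_nonneg hp0 hp1 U' (fun E _ => mul_nonneg (Real.exp_pos _).le (Real.exp_pos _).le)
  rw [step1, ← hprq]
  by_cases hqsign : 0 ≤ q
  · calc p ^ (R i).card * q * EV p T (fun E => Real.exp (-(s * XC R E)))
        = p ^ (R i).card * (q * EV p T (fun E => Real.exp (-(s * XC R E)))) := by ring
      _ ≤ p ^ (R i).card * (EV p U' (fun E' => Real.exp (-(s * Z (E' ∪ R i))))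
            * EV p U' (fun E' => Real.exp (-(s * Y (E' ∪ R i))))) := by
          apply mul_le_mul_of_nonneg_left _ (pow_nonneg hp0 _)
          exact mul_le_mul step4 step3 hφ0 hEV1nn
      _ ≤ p ^ (R i).card * EV p U'
            (fun E' => Real.exp (-(s * Z (E' ∪ R i))) * Real.exp (-(s * Y (E' ∪ R i)))) :=
          mul_le_mul_of_nonneg_left step2 (pow_nonneg hp0 _)
  · push_neg at hqsign
    have hle : p ^ (R i).card * q * EV p T (fun E => Real.exp (-(s * XC R E))) ≤ 0 :=
      mul_nonpos_of_nonpos_of_nonneg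
        (mul_nonpos_of_nonneg_of_nonpos (pow_nonneg hp0 _) hqsign.le) hφ0
    calc p ^ (R i).card * q * EV p T (fun E => Real.exp (-(s * XC R E))) ≤ 0 := hle
      _ ≤ _ := mul_nonneg (pow_nonneg hp0 _) hRHSnn

lemma janson_phi_le [DecidableEq ι] (hp0 : 0 ≤ p) (hp1 : p ≤ 1)
    (R : ι → Finset (Finset (Fin n))) (T : Finset (Finset (Fin n))) (hR : ∀ j, R j ⊆ T)
    {s : ℝ} (hs : 0 ≤ s) :
    EV p T (fun E => Real.exp (-(s * XC R E)))
      ≤ Real.exp (-(s * ∑ i : ι, p ^ (R i).card)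
          + s ^ 2 * (∑ i : ι, ∑ j ∈ Finset.univ.filter (fun j => ¬ Disjoint (R i) (R j)),
              p ^ ((R i ∪ R j).card)) / 2) := by
  set μ : ℝ := ∑ i : ι, p ^ (R i).card with hμ
  set Δ : ℝ := ∑ i : ι, ∑ j ∈ Finset.univ.filter (fun j => ¬ Disjoint (R i) (R j)),
      p ^ ((R i ∪ R j).card) with hΔ
  set φ : ℝ → ℝ := fun x => EV p T (fun E => Real.exp (-(x * XC R E))) with hφ
  have hφpos : ∀ x, 0 < φ x := fun x => EV_pos hp0 hp1 T (fun E _ => Real.exp_pos _)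
  have hderiv : ∀ x, HasDerivAt φ
      (-(EV p T (fun E => XC R E * Real.exp (-(x * XC R E))))) x := by
    intro x
    have hsum : HasDerivAt (fun y => ∑ E ∈ T.powerset,
        p ^ E.card * (1 - p) ^ (T.card - E.card) * Real.exp (-(y * XC R E)))
        (∑ E ∈ T.powerset,
          p ^ E.card * (1 - p) ^ (T.card - E.card) * (Real.exp (-(x * XC R E)) * (-(XC R E)))) x := by
      apply HasDerivAt.fun_sum
      intro E _
      have h1 : HasDerivAt (fun y : ℝ => -(y * XC R E)) (-(XC R E)) x :=
        (hasDerivAt_mul_const (XC R E)).neg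
      exact (h1.exp).const_mul _
    have heq : (∑ E ∈ T.powerset,
          p ^ E.card * (1 - p) ^ (T.card - E.card) * (Real.exp (-(x * XC R E)) * (-(XC R E))))
        = -(EV p T (fun E => XC R E * Real.exp (-(x * XC R E)))) := by
      rw [EV, ← Finset.sum_neg_distrib]
      apply Finset.sum_congr rfl
      intros; ring
    rw [heq] at hsum
    exact hsum
  have hφ'bound : ∀ x, 0 ≤ x →
      (μ - x * Δ) * φ x ≤ EV p T (fun E => XC R E * Real.exp (-(x * XC R E))) := by
    intro x hx
    have hXrep : ∀ E, XC R E * Real.exp (-(x * XC R E))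
        = ∑ i : ι, (if R i ⊆ E then 1 else 0) * Real.exp (-(x * XC R E)) := by
      intro E
      rw [← Finset.sum_mul]
      congr 1
      rw [XC, Finset.card_filter]
      push_cast
      rfl
    have hEVrep : EV p T (fun E => XC R E * Real.exp (-(x * XC R E)))
        = ∑ i : ι, EV p T (fun E => (if R i ⊆ E then 1 else 0) * Real.exp (-(x * XC R E))) := by
      rw [← EV_sum]
      apply EV_congr
      intro E _
      exact hXrep E
    have hlhs : (μ - x * Δ) * φ x
        = ∑ i : ι, (p ^ (R i).card
            - x * ∑ j ∈ Finset.univ.filter (fun j => ¬ Disjoint (R i) (R j)),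
                p ^ ((R i ∪ R j).card)) * φ x := by
      rw [← Finset.sum_mul]
      congr 1
      rw [hμ, hΔ, Finset.sum_sub_distrib, Finset.mul_sum]
    rw [hEVrep, hlhs]
    apply Finset.sum_le_sum
    intro i _
    exact per_index hp0 hp1 R T hR i hx
  set h : ℝ → ℝ := fun x => Real.log (φ x) + x * μ - x ^ 2 * (Δ / 2) with hh
  have hH : ∀ x, HasDerivAt h
      (-(EV p T (fun E => XC R E * Real.exp (-(x * XC R E)))) / φ x + μ - 2 * x ^ 1 * (Δ / 2)) x := by
    intro x
    have d1 : HasDerivAt (fun y => Real.log (φ y))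
        (-(EV p T (fun E => XC R E * Real.exp (-(x * XC R E)))) / φ x) x :=
      (hderiv x).log (ne_of_gt (hφpos x))
    have d2 : HasDerivAt (fun y : ℝ => y * μ) μ x := hasDerivAt_mul_const μ
    have d3 : HasDerivAt (fun y : ℝ => y ^ 2 * (Δ / 2)) (2 * x ^ 1 * (Δ / 2)) x := by
      have := hasDerivAt_pow 2 x
      norm_num at this ⊢
      exact this.mul_const _
    exact (d1.add d2).sub d3
  have hanti : AntitoneOn h (Set.Ici (0:ℝ)) := by
    apply antitoneOn_of_deriv_nonpos (convex_Ici 0)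
    · intro x _
      exact (hH x).continuousAt.continuousWithinAt
    · intro x _
      exact (hH x).differentiableAt.differentiableWithinAt
    · intro x hx
      rw [interior_Ici] at hx
      rw [(hH x).deriv]
      have hb := hφ'bound x (le_of_lt hx)
      have hφx := hφpos x
      have : -(EV p T (fun E => XC R E * Real.exp (-(x * XC R E)))) / φ x ≤ -(μ - x * Δ) := by
        rw [div_le_iff₀ hφx]
        nlinarith [hb]
      have h2 : (2:ℝ) * x ^ 1 * (Δ / 2) = x * Δ := by ring
      rw [h2]
      linarith
  have h0 : h 0 = 0 := by
    rw [hh]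
    simp only
    have : φ 0 = 1 := by
      show EV p T (fun E => Real.exp (-((0:ℝ) * XC R E))) = 1
      have e : EV p T (fun E => Real.exp (-((0:ℝ) * XC R E))) = EV p T (fun _ => 1) := by
        apply EV_congr
        intro E _
        norm_num
      rw [e, EV_one]
    rw [this, Real.log_one]
    ring
  have hfinal : h s ≤ 0 := by
    rw [← h0]
    exact hanti (Set.self_mem_Ici) (Set.mem_Ici.2 hs) hs
  have hlog : Real.log (φ s) ≤ -(s * μ) + s ^ 2 * Δ / 2 := by
    rw [hh] at hfinal
    simp only at hfinal
    nlinarith [hfinal]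
  calc φ s = Real.exp (Real.log (φ s)) := (Real.exp_log (hφpos s)).symm
    _ ≤ Real.exp (-(s * μ) + s ^ 2 * Δ / 2) := Real.exp_le_exp.2 hlog

lemma janson_ineq [DecidableEq ι] (hp0 : 0 ≤ p) (hp1 : p ≤ 1)
    (R : ι → Finset (Finset (Fin n))) (T : Finset (Finset (Fin n))) (hR : ∀ j, R j ⊆ T)
    {t : ℝ} (ht : 0 ≤ t)
    (hΔpos : 0 < ∑ i : ι, ∑ j ∈ Finset.univ.filter (fun j => ¬ Disjoint (R i) (R j)),
        p ^ ((R i ∪ R j).card)) :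
    EV p T (fun E => if XC R E ≤ (∑ i : ι, p ^ (R i).card) - t then 1 else 0)
      ≤ Real.exp (-(t ^ 2 / (2 * ∑ i : ι, ∑ j ∈ Finset.univ.filter
          (fun j => ¬ Disjoint (R i) (R j)), p ^ ((R i ∪ R j).card)))) := by
  set μ : ℝ := ∑ i : ι, p ^ (R i).card with hμ
  set Δ : ℝ := ∑ i : ι, ∑ j ∈ Finset.univ.filter (fun j => ¬ Disjoint (R i) (R j)),
      p ^ ((R i ∪ R j).card) with hΔ
  set s : ℝ := t / Δ with hsdef
  have hs : 0 ≤ s := div_nonneg ht hΔpos.le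
  have hpt : ∀ E ∈ T.powerset, (if XC R E ≤ μ - t then (1:ℝ) else 0)
      ≤ Real.exp (s * (μ - t)) * Real.exp (-(s * XC R E)) := by
    intro E _
    by_cases hc : XC R E ≤ μ - t
    · rw [if_pos hc, ← Real.exp_add]
      rw [show (1:ℝ) = Real.exp 0 by rw [Real.exp_zero]]
      apply Real.exp_le_exp.2
      nlinarith [mul_le_mul_of_nonneg_left hc hs]
    · rw [if_neg hc]
      positivity
  calc EV p T (fun E => if XC R E ≤ μ - t then (1:ℝ) else 0)
      ≤ EV p T (fun E => Real.exp (s * (μ - t)) * Real.exp (-(s * XC R E))) :=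
        EV_mono hp0 hp1 T hpt
    _ = Real.exp (s * (μ - t)) * EV p T (fun E => Real.exp (-(s * XC R E))) :=
        EV_const_mul p T _ _
    _ ≤ Real.exp (s * (μ - t)) * Real.exp (-(s * μ) + s ^ 2 * Δ / 2) :=
        mul_le_mul_of_nonneg_left (janson_phi_le hp0 hp1 R T hR hs) (Real.exp_pos _).le
    _ = Real.exp (s * (μ - t) + (-(s * μ) + s ^ 2 * Δ / 2)) := (Real.exp_add _ _).symm
    _ = Real.exp (-(t ^ 2 / (2 * Δ))) := by
        congr 1
        rw [hsdef]
        field_simp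
        ring

end Janson
lemma Phi_le {b : ℕ} (F : Finset (Finset (Fin b))) (n : ℕ) (p : ℝ)
    {V' : Finset (Fin b)} {E' : Finset (Finset (Fin b))} (hE'F : E' ⊆ F)
    (hE'ne : E'.Nonempty) (hE'V : ∀ e ∈ E', e ⊆ V') :
    Phi (Finset.univ : Finset (Fin b)) F n p ≤ (n : ℝ) ^ V'.card * p ^ E'.card := by
  have hfin : { x : ℝ | ∃ (V' : Finset (Fin b)) (E' : Finset (Finset (Fin b))),
      V' ⊆ Finset.univ ∧ E' ⊆ F ∧ E'.Nonempty ∧ (∀ e ∈ E', e ⊆ V') ∧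
      x = (n : ℝ) ^ V'.card * p ^ E'.card }.Finite := by
    apply Set.Finite.subset (Set.finite_range
      (fun q : Finset (Fin b) × Finset (Finset (Fin b)) => (n : ℝ) ^ q.1.card * p ^ q.2.card))
    rintro x ⟨V'', E'', _, _, _, _, hx⟩
    exact ⟨(V'', E''), hx.symm⟩
  apply csInf_le hfin.bddBelow
  exact ⟨V', E', Finset.subset_univ _, hE'F, hE'ne, hE'V, rfl⟩

/-- The map sending an embedding to its required edge set. -/
def Rmap {b n : ℕ} (F : Finset (Finset (Fin b))) (g : Fin b → Fin n) :
    Finset (Finset (Fin n)) := F.image fun e => e.image g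

lemma Rmap_card {b n : ℕ} (F : Finset (Finset (Fin b))) {g : Fin b → Fin n}
    (hg : Function.Injective g) : (Rmap F g).card = F.card := by
  rw [Rmap]
  apply Finset.card_image_of_injective
  exact Finset.image_injective hg

lemma Rmap_subset_allEdges {b n k : ℕ} (F : Finset (Finset (Fin b)))
    (hFcard : ∀ e ∈ F, e.card = k) {g : Fin b → Fin n} (hg : Function.Injective g) :
    Rmap F g ⊆ Finset.powersetCard k Finset.univ := by
  intro e' he'
  rw [Rmap, Finset.mem_image] at he'
  obtain ⟨e, heF, rfl⟩ := he'
  rw [Finset.mem_powersetCard]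
  exact ⟨Finset.subset_univ _, by rw [Finset.card_image_of_injective _ hg, hFcard e heF]⟩

lemma Rmap_subset_iff {b n : ℕ} (F : Finset (Finset (Fin b))) (g : Fin b → Fin n)
    (E : Finset (Finset (Fin n))) : Rmap F g ⊆ E ↔ ∀ e ∈ F, e.image g ∈ E := by
  rw [Rmap, Finset.image_subset_iff]

/-- Key counting bound: the Janson `Δ̄` times `Φ` is controlled. -/
lemma Delta_bound {b n k f : ℕ} (F : Finset (Finset (Fin b)))
    (hFcard : ∀ e ∈ F, e.card = k) (hFf : F.card = f) (hf : 0 < f) (hk : 0 < k)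
    (p : ℝ) (hp0 : 0 ≤ p)
    (𝒢 : Finset (Fin b → Fin n)) (h𝒢inj : ∀ g ∈ 𝒢, Function.Injective g) :
    (∑ i : {g // g ∈ 𝒢}, ∑ j ∈ Finset.univ.filter
        (fun j : {g // g ∈ 𝒢} => ¬ Disjoint (Rmap F i.1) (Rmap F j.1)),
      p ^ ((Rmap F i.1 ∪ Rmap F j.1).card)) * Phi (Finset.univ : Finset (Fin b)) F n p
    ≤ (𝒢.card : ℝ) * (2:ℝ) ^ f * ((f * k : ℕ) : ℝ) ^ b * (n : ℝ) ^ b * p ^ (2 * f) := by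
  classical
  rw [Finset.sum_mul]
  have key : ∀ i : {g // g ∈ 𝒢},
      (∑ j ∈ Finset.univ.filter
          (fun j : {g // g ∈ 𝒢} => ¬ Disjoint (Rmap F i.1) (Rmap F j.1)),
        p ^ ((Rmap F i.1 ∪ Rmap F j.1).card)) * Phi (Finset.univ : Finset (Fin b)) F n p
      ≤ (2:ℝ) ^ f * ((f * k : ℕ) : ℝ) ^ b * (n : ℝ) ^ b * p ^ (2 * f) := by
    intro i
    set g : Fin b → Fin n := i.1 with hgdef
    have hgi : Function.Injective g := h𝒢inj _ i.2
    set Dep : Finset {g // g ∈ 𝒢} := Finset.univ.filter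
      (fun j : {g // g ∈ 𝒢} => ¬ Disjoint (Rmap F g) (Rmap F j.1)) with hDep
    set κ : {g // g ∈ 𝒢} → Finset (Finset (Fin b)) :=
      fun j => F.filter (fun e => e.image j.1 ∈ Rmap F g) with hκ
    set t : Finset (Finset (Finset (Fin b))) :=
      F.powerset.filter (fun E'' => E''.Nonempty) with ht
    have hmaps : ∀ j ∈ Dep, κ j ∈ t := by
      intro j hj
      rw [ht, Finset.mem_filter, Finset.mem_powerset]
      refine ⟨Finset.filter_subset _ _, ?_⟩
      rw [hDep, Finset.mem_filter] at hj
      rw [Finset.not_disjoint_iff] at hj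
      obtain ⟨x, hx1, hx2⟩ := hj.2
      rw [Rmap, Finset.mem_image] at hx2
      obtain ⟨e, heF, rfl⟩ := hx2
      exact ⟨e, Finset.mem_filter.2 ⟨heF, hx1⟩⟩
    rw [← Finset.sum_fiberwise_of_maps_to hmaps (fun j => p ^ ((Rmap F g ∪ Rmap F j.1).card))]
    -- bound each fiber
    rw [Finset.sum_mul]
    have fiber_bound : ∀ E'' ∈ t,
        (∑ j ∈ Dep.filter (fun j => κ j = E''), p ^ ((Rmap F g ∪ Rmap F j.1).card))
          * Phi (Finset.univ : Finset (Fin b)) F n p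
        ≤ ((f * k : ℕ) : ℝ) ^ b * (n : ℝ) ^ b * p ^ (2 * f) := by
      intro E'' hE''
      rw [ht, Finset.mem_filter, Finset.mem_powerset] at hE''
      obtain ⟨hE''F, hE''ne⟩ := hE''
      set V'' : Finset (Fin b) := E''.biUnion id with hV''
      have hEV : ∀ e ∈ E'', e ⊆ V'' := by
        intro e he x hx
        rw [hV'', Finset.mem_biUnion]
        exact ⟨e, he, hx⟩
      have hPhi := Phi_le F n p hE''F hE''ne hEV
      -- each term: p ^ card(R∪R') * Phi ≤ n^{v''} p^{2f}
      have hterm : ∀ j ∈ Dep.filter (fun j => κ j = E''),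
          p ^ ((Rmap F g ∪ Rmap F j.1).card) * Phi (Finset.univ : Finset (Fin b)) F n p
          ≤ (n : ℝ) ^ V''.card * p ^ (2 * f) := by
        intro j hj
        rw [Finset.mem_filter] at hj
        obtain ⟨hjDep, hjκ⟩ := hj
        have hji : Function.Injective j.1 := h𝒢inj _ j.2
        have hinter : Rmap F g ∩ Rmap F j.1 = E''.image (fun e => e.image j.1) := by
          ext x
          rw [Finset.mem_inter, Finset.mem_image]
          constructor
          · rintro ⟨hx1, hx2⟩
            rw [Rmap, Finset.mem_image] at hx2
            obtain ⟨e, heF, rfl⟩ := hx2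
            refine ⟨e, ?_, rfl⟩
            rw [← hjκ, hκ, Finset.mem_filter]
            exact ⟨heF, hx1⟩
          · rintro ⟨e, heE, rfl⟩
            rw [← hjκ, hκ, Finset.mem_filter] at heE
            exact ⟨heE.2, Finset.mem_image.2 ⟨e, heE.1, rfl⟩⟩
        have hintercard : (Rmap F g ∩ Rmap F j.1).card = E''.card := by
          rw [hinter]
          exact Finset.card_image_of_injective _ (Finset.image_injective hji)
        have hcard : (Rmap F g ∪ Rmap F j.1).card + E''.card = 2 * f := by
          have h1 := Finset.card_inter_add_card_union (Rmap F g) (Rmap F j.1)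
          rw [hintercard, Rmap_card F hgi, Rmap_card F hji, hFf] at h1
          omega
        calc p ^ ((Rmap F g ∪ Rmap F j.1).card) * Phi (Finset.univ : Finset (Fin b)) F n p
            ≤ p ^ ((Rmap F g ∪ Rmap F j.1).card) * ((n : ℝ) ^ V''.card * p ^ E''.card) :=
              mul_le_mul_of_nonneg_left hPhi (pow_nonneg hp0 _)
          _ = (n : ℝ) ^ V''.card * p ^ ((Rmap F g ∪ Rmap F j.1).card + E''.card) := by
              rw [pow_add]; ring
          _ = (n : ℝ) ^ V''.card * p ^ (2 * f) := by rw [hcard]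
      -- fiber cardinality
      set W : Finset (Fin n) := (Rmap F g).biUnion id with hW
      have hWcard : W.card ≤ f * k := by
        rw [hW]
        calc ((Rmap F g).biUnion id).card ≤ ∑ e ∈ Rmap F g, (id e).card :=
              Finset.card_biUnion_le
          _ = ∑ e ∈ Rmap F g, k := by
              apply Finset.sum_congr rfl
              intro e he
              rw [Rmap, Finset.mem_image] at he
              obtain ⟨e', he'F, rfl⟩ := he
              simp only [id]
              rw [Finset.card_image_of_injective _ hgi, hFcard e' he'F]
          _ = f * k := by rw [Finset.sum_const, Rmap_card F hgi, hFf, smul_eq_mul]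
      have hfibcard : ((Dep.filter (fun j => κ j = E'')).card : ℝ)
          ≤ ((f * k : ℕ) : ℝ) ^ V''.card * (n : ℝ) ^ (b - V''.card) := by
        set 𝒮 : Finset (Fin b → Fin n) :=
          Finset.univ.filter (fun h : Fin b → Fin n => ∀ v ∈ V'', h v ∈ W) with h𝒮
        have hinj : ∀ j ∈ Dep.filter (fun j => κ j = E''), (j.1 : Fin b → Fin n) ∈ 𝒮 := by
          intro j hj
          rw [Finset.mem_filter] at hj
          rw [h𝒮, Finset.mem_filter]
          refine ⟨Finset.mem_univ _, ?_⟩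
          intro v hv
          rw [hV'', Finset.mem_biUnion] at hv
          obtain ⟨e, heE'', hve⟩ := hv
          have : e.image j.1 ∈ Rmap F g := by
            have := hj.2 ▸ heE''
            rw [hκ, Finset.mem_filter] at this
            exact this.2
          rw [hW, Finset.mem_biUnion]
          exact ⟨e.image j.1, this, Finset.mem_image_of_mem _ hve⟩
        have hcardle : (Dep.filter (fun j => κ j = E'')).card ≤ 𝒮.card := by
          apply Finset.card_le_card_of_injOn (fun j => (j.1 : Fin b → Fin n)) (fun j hj => hinj j hj)
          intro x _ y _ hxy
          exact Subtype.ext hxy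
        have h𝒮card : 𝒮.card ≤ (f * k) ^ V''.card * n ^ (b - V''.card) := by
          have hsub : 𝒮 ⊆ Fintype.piFinset
              (fun v : Fin b => if v ∈ V'' then W else Finset.univ) := by
            intro h hh
            rw [h𝒮, Finset.mem_filter] at hh
            rw [Fintype.mem_piFinset]
            intro v
            by_cases hv : v ∈ V''
            · rw [if_pos hv]; exact hh.2 v hv
            · rw [if_neg hv]; exact Finset.mem_univ _
          calc 𝒮.card ≤ (Fintype.piFinset
              (fun v : Fin b => if v ∈ V'' then W else Finset.univ)).card :=
                Finset.card_le_card hsub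
            _ = ∏ v : Fin b, (if v ∈ V'' then W else Finset.univ).card :=
                Fintype.card_piFinset _
            _ ≤ (f * k) ^ V''.card * n ^ (b - V''.card) := by
                rw [← Finset.prod_filter_mul_prod_filter_not Finset.univ (fun v => v ∈ V'')]
                have e1 : Finset.univ.filter (fun v : Fin b => v ∈ V'') = V'' := by
                  ext v; simp
                have hcard1 : (Finset.univ.filter (fun v : Fin b => v ∈ V'')).card
                    = V''.card := by rw [e1]
                have hcard2 : (Finset.univ.filter (fun v : Fin b => ¬ v ∈ V'')).card
                    = b - V''.card := by
                  have := Finset.card_filter_add_card_filter_not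
                    (s := (Finset.univ : Finset (Fin b))) (p := fun v => v ∈ V'')
                  rw [hcard1] at this
                  simp only [Finset.card_univ, Fintype.card_fin] at this
                  omega
                apply mul_le_mul
                · calc ∏ v ∈ Finset.univ.filter (fun v : Fin b => v ∈ V''),
                      (if v ∈ V'' then W else Finset.univ).card
                      = ∏ v ∈ Finset.univ.filter (fun v : Fin b => v ∈ V''), W.card := by
                        apply Finset.prod_congr rfl
                        intro v hv
                        rw [Finset.mem_filter] at hv
                        rw [if_pos hv.2]
                    _ = W.card ^ V''.card := by rw [Finset.prod_const, hcard1]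
                    _ ≤ (f * k) ^ V''.card := Nat.pow_le_pow_left hWcard _
                · calc ∏ v ∈ Finset.univ.filter (fun v : Fin b => ¬ v ∈ V''),
                      (if v ∈ V'' then W else Finset.univ).card
                      = ∏ v ∈ Finset.univ.filter (fun v : Fin b => ¬ v ∈ V''),
                          (Finset.univ : Finset (Fin n)).card := by
                        apply Finset.prod_congr rfl
                        intro v hv
                        rw [Finset.mem_filter] at hv
                        rw [if_neg hv.2]
                    _ = n ^ (b - V''.card) := by
                        rw [Finset.prod_const, hcard2, Finset.card_univ, Fintype.card_fin]
                    _ ≤ n ^ (b - V''.card) := le_refl _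
                · exact Nat.zero_le _
                · exact Nat.zero_le _
        calc ((Dep.filter (fun j => κ j = E'')).card : ℝ) ≤ (𝒮.card : ℝ) := by
              exact_mod_cast hcardle
          _ ≤ (((f * k) ^ V''.card * n ^ (b - V''.card) : ℕ) : ℝ) := by exact_mod_cast h𝒮card
          _ = ((f * k : ℕ) : ℝ) ^ V''.card * (n : ℝ) ^ (b - V''.card) := by push_cast; ring
      -- combine fiber bound
      have hV''le : V''.card ≤ b := by
        calc V''.card ≤ Fintype.card (Fin b) := by
              rw [← Finset.card_univ]
              exact Finset.card_le_card (Finset.subset_univ _)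
          _ = b := Fintype.card_fin b
      calc (∑ j ∈ Dep.filter (fun j => κ j = E''), p ^ ((Rmap F g ∪ Rmap F j.1).card))
            * Phi (Finset.univ : Finset (Fin b)) F n p
          = ∑ j ∈ Dep.filter (fun j => κ j = E''),
              p ^ ((Rmap F g ∪ Rmap F j.1).card) * Phi (Finset.univ : Finset (Fin b)) F n p := by
            rw [Finset.sum_mul]
        _ ≤ ∑ j ∈ Dep.filter (fun j => κ j = E''), (n : ℝ) ^ V''.card * p ^ (2 * f) :=
            Finset.sum_le_sum hterm
        _ = ((Dep.filter (fun j => κ j = E'')).card : ℝ) * ((n : ℝ) ^ V''.card * p ^ (2 * f)) := by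
            rw [Finset.sum_const, nsmul_eq_mul]
        _ ≤ (((f * k : ℕ) : ℝ) ^ V''.card * (n : ℝ) ^ (b - V''.card))
              * ((n : ℝ) ^ V''.card * p ^ (2 * f)) := by
            apply mul_le_mul_of_nonneg_right hfibcard
            exact mul_nonneg (pow_nonneg (Nat.cast_nonneg n) _) (pow_nonneg hp0 _)
        _ = ((f * k : ℕ) : ℝ) ^ V''.card * (n : ℝ) ^ ((b - V''.card) + V''.card) * p ^ (2 * f) := by
            rw [pow_add]; ring
        _ ≤ ((f * k : ℕ) : ℝ) ^ b * (n : ℝ) ^ b * p ^ (2 * f) := by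
            have h1 : (b - V''.card) + V''.card = b := by omega
            rw [h1]
            apply mul_le_mul_of_nonneg_right _ (pow_nonneg hp0 _)
            apply mul_le_mul_of_nonneg_right _ (pow_nonneg (Nat.cast_nonneg n) _)
            apply pow_le_pow_right₀ _ hV''le
            have : (1 : ℕ) ≤ f * k := Nat.one_le_iff_ne_zero.2 (by positivity)
            exact_mod_cast this
    -- sum over fibers: at most 2^f of them
    calc ∑ E'' ∈ t, (∑ j ∈ Dep.filter (fun j => κ j = E''),
            p ^ ((Rmap F g ∪ Rmap F j.1).card)) * Phi (Finset.univ : Finset (Fin b)) F n p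
        ≤ ∑ E'' ∈ t, ((f * k : ℕ) : ℝ) ^ b * (n : ℝ) ^ b * p ^ (2 * f) :=
          Finset.sum_le_sum fiber_bound
      _ = (t.card : ℝ) * (((f * k : ℕ) : ℝ) ^ b * (n : ℝ) ^ b * p ^ (2 * f)) := by
          rw [Finset.sum_const, nsmul_eq_mul]
      _ ≤ (2:ℝ) ^ f * (((f * k : ℕ) : ℝ) ^ b * (n : ℝ) ^ b * p ^ (2 * f)) := by
          apply mul_le_mul_of_nonneg_right
          · have h1 : t.card ≤ F.powerset.card := by
              rw [ht]
              exact Finset.card_le_card (Finset.filter_subset _ _)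
            rw [Finset.card_powerset, hFf] at h1
            calc (t.card : ℝ) ≤ ((2 ^ f : ℕ) : ℝ) := by exact_mod_cast h1
              _ = (2:ℝ) ^ f := by push_cast; ring
          · positivity
      _ = (2:ℝ) ^ f * ((f * k : ℕ) : ℝ) ^ b * (n : ℝ) ^ b * p ^ (2 * f) := by ring
  calc ∑ i : {g // g ∈ 𝒢}, (∑ j ∈ Finset.univ.filter
          (fun j : {g // g ∈ 𝒢} => ¬ Disjoint (Rmap F i.1) (Rmap F j.1)),
        p ^ ((Rmap F i.1 ∪ Rmap F j.1).card)) * Phi (Finset.univ : Finset (Fin b)) F n p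
      ≤ ∑ _i : {g // g ∈ 𝒢}, (2:ℝ) ^ f * ((f * k : ℕ) : ℝ) ^ b * (n : ℝ) ^ b * p ^ (2 * f) :=
        Finset.sum_le_sum (fun i _ => key i)
    _ = (𝒢.card : ℝ) * (2:ℝ) ^ f * ((f * k : ℕ) : ℝ) ^ b * (n : ℝ) ^ b * p ^ (2 * f) := by
        rw [Finset.sum_const, nsmul_eq_mul]
        rw [Finset.card_univ, Fintype.card_coe]
        ring

/-- Classical indicator of an event. -/
noncomputable def indE {n : ℕ} (P : Finset (Finset (Fin n)) → Prop)
    (E : Finset (Finset (Fin n))) : ℝ :=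
  letI := Classical.propDecidable (P E)
  if P E then 1 else 0

lemma indE_pos {n : ℕ} {P : Finset (Finset (Fin n)) → Prop} {E : Finset (Finset (Fin n))}
    (h : P E) : indE P E = 1 := by simp [indE, h]

lemma indE_neg {n : ℕ} {P : Finset (Finset (Fin n)) → Prop} {E : Finset (Finset (Fin n))}
    (h : ¬ P E) : indE P E = 0 := by simp [indE, h]

lemma indE_nonneg {n : ℕ} (P : Finset (Finset (Fin n)) → Prop) (E : Finset (Finset (Fin n))) :
    0 ≤ indE P E := by
  by_cases h : P E
  · rw [indE_pos h]; norm_num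
  · rw [indE_neg h]

lemma rProb_eq_EV (n k : ℕ) (p : ℝ) (P : Finset (Finset (Fin n)) → Prop) :
    rProb n k p P = EV p (allEdges n k) (indE P) := by
  classical
  rw [rProb, EV]
  apply Finset.sum_congr rfl
  intro E _
  by_cases h : P E <;> simp [indE, h]

lemma rProb_add_compl (n k : ℕ) (p : ℝ) (P : Finset (Finset (Fin n)) → Prop) :
    rProb n k p P + rProb n k p (fun E => ¬ P E) = 1 := by
  rw [rProb_eq_EV, rProb_eq_EV, ← EV_one (n := n) p (allEdges n k), EV, EV, EV,
    ← Finset.sum_add_distrib]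
  apply Finset.sum_congr rfl
  intro E _
  by_cases h : P E
  · rw [indE_pos h, indE_neg (not_not.2 h)]; ring
  · rw [indE_neg h, indE_pos h]; ring

lemma rProb_mono' (n k : ℕ) {p : ℝ} (hp0 : 0 ≤ p) (hp1 : p ≤ 1)
    {P Q : Finset (Finset (Fin n)) → Prop} (h : ∀ E, P E → Q E) :
    rProb n k p P ≤ rProb n k p Q := by
  rw [rProb_eq_EV, rProb_eq_EV]
  apply EV_mono hp0 hp1
  intro E _
  by_cases hP : P E
  · rw [indE_pos hP, indE_pos (h E hP)]
  · rw [indE_neg hP]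
    exact indE_nonneg _ _

lemma rProb_union {σ : Type*} (n k : ℕ) {p : ℝ} (hp0 : 0 ≤ p) (hp1 : p ≤ 1)
    (s : Finset σ) (Ps : σ → Finset (Finset (Fin n)) → Prop) :
    rProb n k p (fun E => ∃ x ∈ s, Ps x E) ≤ ∑ x ∈ s, rProb n k p (Ps x) := by
  rw [rProb_eq_EV]
  have h1 : ∀ x ∈ s, rProb n k p (Ps x) = EV p (allEdges n k) (indE (Ps x)) :=
    fun x _ => rProb_eq_EV n k p (Ps x)
  rw [Finset.sum_congr rfl h1, ← EV_sum]
  apply EV_mono hp0 hp1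
  intro E _
  by_cases h : ∃ x ∈ s, Ps x E
  · obtain ⟨x₀, hx₀s, hx₀⟩ := h
    rw [indE_pos ⟨x₀, hx₀s, hx₀⟩]
    calc (1:ℝ) = indE (Ps x₀) E := (indE_pos hx₀).symm
      _ ≤ ∑ x ∈ s, indE (Ps x) E :=
        Finset.single_le_sum (fun x _ => indE_nonneg _ _) hx₀s
  · rw [indE_neg h]
    exact Finset.sum_nonneg fun x _ => indE_nonneg _ _

/-- Lower bound on the number of injections `Fin b → Fin n` with range in `S`. -/
lemma injection_count {n : ℕ} (b : ℕ) (S : Finset (Fin n)) :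
    (S.card).descFactorial b ≤ (Finset.univ.filter
      (fun g : Fin b → Fin n => Function.Injective g ∧ ∀ x, g x ∈ S)).card := by
  classical
  have hcard : Fintype.card (Fin b ↪ {x // x ∈ S}) = (S.card).descFactorial b := by
    rw [Fintype.card_embedding_eq, Fintype.card_coe, Fintype.card_fin]
  rw [← hcard, ← Finset.card_univ]
  apply Finset.card_le_card_of_injOn
    (fun (e : Fin b ↪ {x // x ∈ S}) => (fun i => (e i : Fin n) : Fin b → Fin n))
  · intro e _
    rw [Finset.mem_coe, Finset.mem_filter]
    refine ⟨Finset.mem_univ _, ?_, fun i => (e i).2⟩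
    intro i j hij
    exact e.injective (Subtype.ext hij)
  · intro e1 _ e2 _ h
    have h' := fun i => congrFun h i
    simp only at h'
    apply DFunLike.ext
    intro i
    apply Subtype.ext
    exact h' i

lemma descFactorial_ge (m b : ℕ) : (m + 1 - b) ^ b ≤ m.descFactorial b := by
  induction b with
  | zero => simp
  | succ b ih =>
    rw [Nat.descFactorial_succ]
    calc (m + 1 - (b+1)) ^ (b+1) = (m - b) * (m + 1 - (b+1)) ^ b := by
          rw [pow_succ]
          have h : m + 1 - (b + 1) = m - b := by omega
          rw [h]
          ring
      _ ≤ (m - b) * (m + 1 - b) ^ b := by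
          apply Nat.mul_le_mul_left
          apply Nat.pow_le_pow_left
          omega
      _ ≤ (m - b) * m.descFactorial b := Nat.mul_le_mul_left _ ih

lemma rProb_false (n k : ℕ) (p : ℝ) : rProb n k p (fun _ => False) = 0 := by
  rw [rProb_eq_EV]
  have : EV p (allEdges n k) (indE (n := n) (fun _ => False))
      = EV p (allEdges n k) (fun _ => 0) := by
    apply EV_congr
    intro E _
    exact indE_neg not_false
  rw [this, EV]
  simp

lemma janson_app {n k b f : ℕ} (hk : 0 < k) (F : Finset (Finset (Fin b)))
    (hFcard : ∀ e ∈ F, e.card = k) (hFf : F.card = f) (hf : 0 < f)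
    {p : ℝ} (hpp : 0 < p) (hp1 : p ≤ 1)
    (𝒢 : Finset (Fin b → Fin n)) (h𝒢inj : ∀ g ∈ 𝒢, Function.Injective g)
    (h𝒢ne : 𝒢.Nonempty) {t : ℝ} (ht : 0 ≤ t) :
    ∃ Δ : ℝ, 0 < Δ ∧
      Δ * Phi (Finset.univ : Finset (Fin b)) F n p
        ≤ (𝒢.card : ℝ) * (2:ℝ)^f * ((f*k : ℕ):ℝ)^b * (n:ℝ)^b * p^(2*f) ∧
      rProb n k p (fun E =>
          XC (fun i : {g // g ∈ 𝒢} => Rmap F i.1) E ≤ (𝒢.card : ℝ) * p^f - t)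
        ≤ Real.exp (-(t^2/(2*Δ))) := by
  classical
  have hFne : F.Nonempty := Finset.card_pos.1 (by rw [hFf]; exact hf)
  have hRsub : ∀ j : {g // g ∈ 𝒢}, Rmap F j.1 ⊆ allEdges n k :=
    fun j => Rmap_subset_allEdges F hFcard (h𝒢inj _ j.2)
  have hμ : (∑ i : {g // g ∈ 𝒢}, p ^ ((Rmap F i.1).card)) = (𝒢.card : ℝ) * p^f := by
    have h1 : ∀ i : {g // g ∈ 𝒢}, p ^ ((Rmap F i.1).card) = p^f := by
      intro i
      rw [Rmap_card F (h𝒢inj _ i.2), hFf]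
    rw [Finset.sum_congr rfl (fun i _ => h1 i), Finset.sum_const, Finset.card_univ,
      Fintype.card_coe, nsmul_eq_mul]
  have hNι : Nonempty {g // g ∈ 𝒢} := ⟨⟨h𝒢ne.choose, h𝒢ne.choose_spec⟩⟩
  have hΔpos : 0 < ∑ i : {g // g ∈ 𝒢}, ∑ j ∈ Finset.univ.filter
      (fun j : {g // g ∈ 𝒢} => ¬ Disjoint (Rmap F i.1) (Rmap F j.1)),
      p ^ ((Rmap F i.1 ∪ Rmap F j.1).card) := by
    apply Finset.sum_pos _ Finset.univ_nonempty
    intro i _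
    obtain ⟨e, he⟩ := hFne
    have hRine : (Rmap F i.1).Nonempty := ⟨e.image i.1, Finset.mem_image_of_mem _ he⟩
    have hidep : i ∈ Finset.univ.filter
        (fun j : {g // g ∈ 𝒢} => ¬ Disjoint (Rmap F i.1) (Rmap F j.1)) := by
      rw [Finset.mem_filter]
      refine ⟨Finset.mem_univ _, fun hdis => ?_⟩
      obtain ⟨x, hx⟩ := hRine
      exact Finset.disjoint_left.1 hdis hx hx
    calc (0:ℝ) < p ^ ((Rmap F i.1 ∪ Rmap F i.1).card) := pow_pos hpp _
      _ ≤ ∑ j ∈ Finset.univ.filter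
          (fun j : {g // g ∈ 𝒢} => ¬ Disjoint (Rmap F i.1) (Rmap F j.1)),
          p ^ ((Rmap F i.1 ∪ Rmap F j.1).card) :=
        Finset.single_le_sum (f := fun j : {g // g ∈ 𝒢} =>
          p ^ ((Rmap F i.1 ∪ Rmap F j.1).card))
          (fun j _ => pow_nonneg hpp.le _) hidep
  refine ⟨_, hΔpos, ?_, ?_⟩
  · exact Delta_bound F hFcard hFf hf hk p hpp.le 𝒢 h𝒢inj
  · have J := janson_ineq (ι := {g // g ∈ 𝒢}) hpp.le hp1 (fun i => Rmap F i.1)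
      (allEdges n k) hRsub ht hΔpos
    rw [rProb_eq_EV]
    calc EV p (allEdges n k) (indE (fun E =>
          XC (fun i : {g // g ∈ 𝒢} => Rmap F i.1) E ≤ (𝒢.card : ℝ) * p^f - t))
        = EV p (allEdges n k) (fun E =>
            if XC (fun i : {g // g ∈ 𝒢} => Rmap F i.1) E
              ≤ (∑ i : {g // g ∈ 𝒢}, p ^ ((Rmap F i.1).card)) - t then 1 else 0) := by
          apply EV_congr
          intro E _
          by_cases h : XC (fun i : {g // g ∈ 𝒢} => Rmap F i.1) E ≤ (𝒢.card : ℝ) * p^f - t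
          · rw [indE_pos h, if_pos (by rw [hμ]; exact h)]
          · rw [indE_neg h, if_neg (by rw [hμ]; exact h)]
      _ ≤ Real.exp (-(t^2/(2 * ∑ i : {g // g ∈ 𝒢}, ∑ j ∈ Finset.univ.filter
          (fun j : {g // g ∈ 𝒢} => ¬ Disjoint (Rmap F i.1) (Rmap F j.1)),
          p ^ ((Rmap F i.1 ∪ Rmap F j.1).card)))) := J

end JansonAux

set_option maxHeartbeats 2000000 in
/-- part of Lemma 2.2 of BHKM. Let `F` be a labelled `k`-graph with
`b` vertices and `f > 0` edges and let `λ > 0`. There exist `c > 0` and `n₀` such that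
for all `n ≥ n₀`: if `Φ_F(n,p) ≥ c n`, then for `H = H^{(k)}(n,p)`: (i) with probability
at least `1 - exp(-n)` every induced subgraph of `H` on `λ n` vertices contains a copy
of `F`; (ii) for every family `ℱ` of `λ n^b` ordered `b`-subsets of `V`, with
probability at least `1 - exp(-n)` at least `(λ/2) n^b p^f` of the ordered `b`-sets in
`ℱ` span labelled copies of `F` in `H`. -/
theorem random_graph_copies
    (k : ℕ) (hk : 2 ≤ k) (b f : ℕ) (F : Finset (Finset (Fin b)))
    (hFcard : ∀ e ∈ F, e.card = k) (hFf : F.card = f) (hf : 0 < f)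
    (lam : ℝ) (hlam : 0 < lam) :
    ∃ c : ℝ, 0 < c ∧ ∃ n₀ : ℕ, ∀ n : ℕ, n₀ ≤ n → ∀ p : ℝ, 0 ≤ p → p ≤ 1 →
      c * n ≤ Phi (Finset.univ : Finset (Fin b)) F n p →
      (1 - Real.exp (-(n : ℝ)) ≤ rProb n k p fun E =>
        ∀ S : Finset (Fin n), (S.card : ℝ) = lam * n → ContainsCopy F E S) ∧
      ∀ 𝓕 : Finset (Fin b → Fin n), (∀ A ∈ 𝓕, Function.Injective A) →
        (𝓕.card : ℝ) = lam * (n : ℝ) ^ b →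
        1 - Real.exp (-(n : ℝ)) ≤ rProb n k p fun E =>
          lam / 2 * (n : ℝ) ^ b * p ^ f ≤ (countSpan F 𝓕 E : ℝ) := by
  classical
  have hk0 : 0 < k := lt_of_lt_of_le two_pos hk
  have hfk : (0:ℝ) < ((f*k : ℕ) : ℝ) := by
    have h1 : 0 < f * k := Nat.mul_pos hf hk0
    exact_mod_cast h1
  set C₀ : ℝ := (2:ℝ)^f * ((f*k : ℕ):ℝ)^b with hC₀def
  have hC₀pos : 0 < C₀ := by positivity
  set c : ℝ := 4*C₀*(2/lam)^b + 8*C₀/lam + 1 with hcdef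
  have hcpos : 0 < c := by positivity
  refine ⟨c, hcpos, Nat.ceil ((2*(b:ℝ)+2)/lam) + 1, ?_⟩
  intro n hn p hp0 hp1 hPhi
  have hn1 : 1 ≤ n := le_trans (Nat.le_add_left 1 _) hn
  have hnR : (1:ℝ) ≤ (n:ℝ) := by exact_mod_cast hn1
  have hnpos : (0:ℝ) < n := lt_of_lt_of_le one_pos hnR
  have hlamn : 2*(b:ℝ) + 2 ≤ lam * n := by
    have h1 : ((2*(b:ℝ)+2)/lam) ≤ ((Nat.ceil ((2*(b:ℝ)+2)/lam) : ℕ) : ℝ) := Nat.le_ceil _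
    have h2 : ((Nat.ceil ((2*(b:ℝ)+2)/lam) : ℕ) : ℝ) ≤ (n:ℝ) := by
      exact_mod_cast le_trans (Nat.le_succ _) hn
    have h3 := h1.trans h2
    rw [div_le_iff₀ hlam] at h3
    nlinarith [h3]
  have hFne : F.Nonempty := Finset.card_pos.1 (by rw [hFf]; exact hf)
  have hPhile : Phi (Finset.univ : Finset (Fin b)) F n p ≤ (n:ℝ)^b * p^f := by
    have h := JansonAux.Phi_le F n p (Finset.Subset.refl F) hFne (fun e _ => Finset.subset_univ e)
    rwa [Finset.card_univ, Fintype.card_fin, hFf] at h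
  have hcn : 0 < c * n := by positivity
  have hppos : 0 < p := by
    rcases lt_or_eq_of_le hp0 with h | h
    · exact h
    · exfalso
      have h0 : p ^ f = 0 := by
        rw [← h]
        exact zero_pow hf.ne'
      rw [h0, mul_zero] at hPhile
      linarith [hPhi, hPhile, hcn]
  have hPhipos : 0 < Phi (Finset.univ : Finset (Fin b)) F n p := lt_of_lt_of_le hcn hPhi
  have hpf : 0 < p^f := pow_pos hppos f
  have hp2f : 0 < p^(2*f) := pow_pos hppos _
  have hnb : (0:ℝ) < (n:ℝ)^b := by positivity
  constructor
  · -- part (i)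
    have key : ∀ S : Finset (Fin n),
        rProb n k p (fun E => (S.card:ℝ) = lam*(n:ℝ) ∧ ¬ ContainsCopy F E S)
          ≤ Real.exp (-(2*(n:ℝ))) := by
      intro S
      by_cases hScard : (S.card : ℝ) = lam * n
      · set 𝒢 : Finset (Fin b → Fin n) := Finset.univ.filter
          (fun g : Fin b → Fin n => Function.Injective g ∧ ∀ x, g x ∈ S) with h𝒢def
        have h𝒢inj : ∀ g ∈ 𝒢, Function.Injective g := by
          intro g hg; rw [h𝒢def, Finset.mem_filter] at hg; exact hg.2.1
        have h𝒢mem : ∀ g ∈ 𝒢, ∀ x, g x ∈ S := by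
          intro g hg; rw [h𝒢def, Finset.mem_filter] at hg; exact hg.2.2
        have hcard1 : ((S.card + 1 - b : ℕ) : ℝ) ^ b ≤ (𝒢.card : ℝ) := by
          have h1 := JansonAux.descFactorial_ge S.card b
          have h2 := JansonAux.injection_count (n := n) b S
          have h3 : (S.card + 1 - b) ^ b ≤ 𝒢.card := le_trans h1 h2
          calc ((S.card + 1 - b : ℕ) : ℝ) ^ b = (((S.card + 1 - b) ^ b : ℕ) : ℝ) := by
                push_cast; ring
            _ ≤ (𝒢.card : ℝ) := by exact_mod_cast h3
        have hble : b ≤ S.card := by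
          have h1 : (2*(b:ℝ)+2) ≤ (S.card:ℝ) := by rw [hScard]; exact hlamn
          have h2 : (b:ℝ) ≤ (S.card:ℝ) := by linarith
          exact_mod_cast h2
        have hhalf : lam * n / 2 ≤ ((S.card + 1 - b : ℕ) : ℝ) := by
          have hble' : b ≤ S.card + 1 := le_trans hble (Nat.le_succ _)
          have hcast : ((S.card + 1 - b : ℕ) : ℝ) = (S.card:ℝ) + 1 - (b:ℝ) := by
            rw [Nat.cast_sub hble']
            push_cast
            ring
          rw [hcast, hScard]
          linarith [hlamn]
        have h𝒢lb : (lam * n / 2)^b ≤ (𝒢.card : ℝ) := by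
          refine le_trans ?_ hcard1
          apply pow_le_pow_left₀ (by positivity) hhalf
        have h𝒢pos : (0:ℝ) < (𝒢.card : ℝ) := lt_of_lt_of_le (by positivity) h𝒢lb
        have h𝒢ne : 𝒢.Nonempty := by
          rw [← Finset.card_pos]
          exact_mod_cast h𝒢pos
        obtain ⟨Δ, hΔpos, hΔbound, hJ⟩ := JansonAux.janson_app hk0 F hFcard hFf hf hppos hp1
          𝒢 h𝒢inj h𝒢ne (t := (𝒢.card:ℝ)*p^f) (by positivity)
        have himp : ∀ E, ((S.card:ℝ) = lam*(n:ℝ) ∧ ¬ ContainsCopy F E S) →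
            JansonAux.XC (fun i : {g // g ∈ 𝒢} => JansonAux.Rmap F i.1) E
              ≤ (𝒢.card:ℝ)*p^f - (𝒢.card:ℝ)*p^f := by
          intro E hE
          rw [sub_self]
          have hzero : ∀ i : {g // g ∈ 𝒢}, ¬ (JansonAux.Rmap F i.1 ⊆ E) := by
            intro i hsub
            apply hE.2
            refine ⟨i.1, ⟨h𝒢inj _ i.2, ?_⟩, fun x => h𝒢mem _ i.2 x⟩
            intro e heF
            exact hsub (Finset.mem_image_of_mem _ heF)
          have hempty : (Finset.univ.filter
              (fun i : {g // g ∈ 𝒢} => JansonAux.Rmap F i.1 ⊆ E)) = ∅ := by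
            rw [Finset.filter_eq_empty_iff]
            exact fun i _ => hzero i
          rw [JansonAux.XC, hempty]
          simp
        have hmono := JansonAux.rProb_mono' n k hp0 hp1 himp
        refine le_trans (le_trans hmono hJ) ?_
        apply Real.exp_le_exp.2
        rw [neg_le_neg_iff, le_div_iff₀ (by positivity : (0:ℝ) < 2*Δ)]
        -- 2n * (2Δ) ≤ (𝒢.card p^f)²
        have hΔle : Δ * (c * n) ≤ (𝒢.card:ℝ) * C₀ * (n:ℝ)^b * p^(2*f) := by
          calc Δ * (c * n) ≤ Δ * Phi (Finset.univ : Finset (Fin b)) F n p :=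
                mul_le_mul_of_nonneg_left hPhi hΔpos.le
            _ ≤ (𝒢.card : ℝ) * (2:ℝ)^f * ((f*k : ℕ):ℝ)^b * (n:ℝ)^b * p^(2*f) := hΔbound
            _ = (𝒢.card:ℝ) * C₀ * (n:ℝ)^b * p^(2*f) := by rw [hC₀def]; ring
        have hGc : 4*C₀*(n:ℝ)^b ≤ c * (𝒢.card:ℝ) := by
          have hc1 : 4*C₀*(2/lam)^b ≤ c := by
            rw [hcdef]
            have : 0 < 8*C₀/lam := by positivity
            linarith
          have h1 : (lam/2)^b * (2/lam)^b = 1 := by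
            rw [← mul_pow]
            have : lam/2 * (2/lam) = 1 := by field_simp
            rw [this, one_pow]
          calc 4*C₀*(n:ℝ)^b = (4*C₀*(2/lam)^b) * ((lam/2)^b * (n:ℝ)^b) := by
                rw [show (4*C₀*(2/lam)^b) * ((lam/2)^b * (n:ℝ)^b)
                    = 4*C₀*(n:ℝ)^b * ((lam/2)^b * (2/lam)^b) by ring, h1, mul_one]
            _ ≤ c * ((lam/2)^b * (n:ℝ)^b) := by
                apply mul_le_mul_of_nonneg_right hc1
                positivity
            _ = c * (lam * n / 2)^b := by
                congr 1
                rw [show lam*(n:ℝ)/2 = (lam/2)*(n:ℝ) by ring, mul_pow]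
            _ ≤ c * (𝒢.card:ℝ) := mul_le_mul_of_nonneg_left h𝒢lb hcpos.le
        have ht2 : ((𝒢.card:ℝ)*p^f)^2 = (𝒢.card:ℝ)^2 * p^(2*f) := by
          rw [mul_pow, ← pow_mul, mul_comm f 2]
        rw [ht2]
        -- 2n*(2Δ) = 4nΔ; 4nΔ*c = 4*(Δ*(c*n)) ≤ 4*𝒢.card*C₀*n^b*p^{2f} ≤ c*𝒢.card²p^{2f}
        have hfinal : 4*(n:ℝ)*Δ*c ≤ c * ((𝒢.card:ℝ)^2 * p^(2*f)) := by
          calc 4*(n:ℝ)*Δ*c = 4*(Δ*(c*n)) := by ring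
            _ ≤ 4*((𝒢.card:ℝ) * C₀ * (n:ℝ)^b * p^(2*f)) := by linarith [hΔle]
            _ = (4*C₀*(n:ℝ)^b) * ((𝒢.card:ℝ) * p^(2*f)) := by ring
            _ ≤ (c * (𝒢.card:ℝ)) * ((𝒢.card:ℝ) * p^(2*f)) := by
                apply mul_le_mul_of_nonneg_right hGc
                positivity
            _ = c * ((𝒢.card:ℝ)^2 * p^(2*f)) := by ring
        nlinarith [hfinal, hcpos]
      · have himp : ∀ E : Finset (Finset (Fin n)),
            ((S.card:ℝ) = lam*(n:ℝ) ∧ ¬ ContainsCopy F E S) → False := fun E hE => hScard hE.1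
        calc rProb n k p (fun E => (S.card:ℝ) = lam*(n:ℝ) ∧ ¬ ContainsCopy F E S)
            ≤ rProb n k p (fun _ => False) := JansonAux.rProb_mono' n k hp0 hp1 himp
          _ = 0 := JansonAux.rProb_false n k p
          _ ≤ Real.exp (-(2*(n:ℝ))) := (Real.exp_pos _).le
    have hbad : rProb n k p (fun E => ¬ ∀ S : Finset (Fin n),
        (S.card:ℝ) = lam*(n:ℝ) → ContainsCopy F E S) ≤ Real.exp (-(n:ℝ)) := by
      have h1 : ∀ E, (¬ ∀ S : Finset (Fin n), (S.card:ℝ) = lam*(n:ℝ) → ContainsCopy F E S) →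
          (∃ S ∈ (Finset.univ : Finset (Fin n)).powerset,
            ((S.card:ℝ) = lam*(n:ℝ) ∧ ¬ ContainsCopy F E S)) := by
        intro E hE
        push_neg at hE
        obtain ⟨S, hS1, hS2⟩ := hE
        exact ⟨S, Finset.mem_powerset.2 (Finset.subset_univ _), hS1, hS2⟩
      calc rProb n k p (fun E => ¬ ∀ S : Finset (Fin n),
            (S.card:ℝ) = lam*(n:ℝ) → ContainsCopy F E S)
          ≤ rProb n k p (fun E => ∃ S ∈ (Finset.univ : Finset (Fin n)).powerset,
              ((S.card:ℝ) = lam*(n:ℝ) ∧ ¬ ContainsCopy F E S)) :=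
            JansonAux.rProb_mono' n k hp0 hp1 h1
        _ ≤ ∑ S ∈ (Finset.univ : Finset (Fin n)).powerset,
              rProb n k p (fun E => (S.card:ℝ) = lam*(n:ℝ) ∧ ¬ ContainsCopy F E S) :=
            JansonAux.rProb_union n k hp0 hp1 _ _
        _ ≤ ∑ _S ∈ (Finset.univ : Finset (Fin n)).powerset, Real.exp (-(2*(n:ℝ))) :=
            Finset.sum_le_sum (fun S _ => key S)
        _ = (2:ℝ)^n * Real.exp (-(2*(n:ℝ))) := by
            rw [Finset.sum_const, nsmul_eq_mul, Finset.card_powerset, Finset.card_univ,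
              Fintype.card_fin]
            push_cast
            ring
        _ ≤ Real.exp (n:ℝ) * Real.exp (-(2*(n:ℝ))) := by
            apply mul_le_mul_of_nonneg_right _ (Real.exp_pos _).le
            have h2e : (2:ℝ) ≤ Real.exp 1 := by
              have := Real.add_one_le_exp 1
              linarith
            calc (2:ℝ)^n ≤ (Real.exp 1)^n := pow_le_pow_left₀ (by norm_num) h2e n
              _ = Real.exp ((n:ℕ) * (1:ℝ)) := (Real.exp_nat_mul 1 n).symm
              _ = Real.exp (n:ℝ) := by rw [mul_one]
        _ = Real.exp (-(n:ℝ)) := by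
            rw [← Real.exp_add]
            congr 1
            ring
    have hcompl := JansonAux.rProb_add_compl n k p (fun E => ∀ S : Finset (Fin n),
      (S.card:ℝ) = lam*(n:ℝ) → ContainsCopy F E S)
    linarith [hbad, hcompl]
  · -- part (ii)
    intro 𝓕 h𝓕inj h𝓕card
    have h𝓕pos : (0:ℝ) < (𝓕.card : ℝ) := by
      rw [h𝓕card]
      positivity
    have h𝓕ne : 𝓕.Nonempty := by
      rw [← Finset.card_pos]
      exact_mod_cast h𝓕pos
    have h𝓕inj' : ∀ g ∈ 𝓕, Function.Injective g := h𝓕inj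
    obtain ⟨Δ, hΔpos, hΔbound, hJ⟩ := JansonAux.janson_app hk0 F hFcard hFf hf hppos hp1
      𝓕 h𝓕inj' h𝓕ne (t := (𝓕.card:ℝ)*p^f/2) (by positivity)
    have hXC : ∀ E : Finset (Finset (Fin n)), (countSpan F 𝓕 E : ℝ)
        = JansonAux.XC (fun i : {A // A ∈ 𝓕} => JansonAux.Rmap F i.1) E := by
      intro E
      have hcards : (Finset.univ.filter
          (fun i : {A // A ∈ 𝓕} => JansonAux.Rmap F i.1 ⊆ E)).card
          = (𝓕.filter (fun A => ∀ e ∈ F, e.image A ∈ E)).card := by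
        apply Finset.card_bij (fun x _ => x.1)
        · intro x hx
          rw [Finset.mem_filter] at hx ⊢
          exact ⟨x.2, (JansonAux.Rmap_subset_iff F x.1 E).1 hx.2⟩
        · intro x _ y _ h
          exact Subtype.ext h
        · intro A hA
          rw [Finset.mem_filter] at hA
          refine ⟨⟨A, hA.1⟩, ?_, rfl⟩
          rw [Finset.mem_filter]
          exact ⟨Finset.mem_univ _, (JansonAux.Rmap_subset_iff F A E).2 hA.2⟩
      rw [countSpan, JansonAux.XC, ← hcards]
    have himp : ∀ E : Finset (Finset (Fin n)),
        (¬ (lam / 2 * (n:ℝ)^b * p^f ≤ (countSpan F 𝓕 E : ℝ))) →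
        JansonAux.XC (fun i : {A // A ∈ 𝓕} => JansonAux.Rmap F i.1) E
          ≤ (𝓕.card:ℝ)*p^f - (𝓕.card:ℝ)*p^f/2 := by
      intro E hE
      rw [← hXC E]
      push_neg at hE
      have heq : (𝓕.card:ℝ)*p^f - (𝓕.card:ℝ)*p^f/2 = lam / 2 * (n:ℝ)^b * p^f := by
        rw [h𝓕card]; ring
      rw [heq]
      exact hE.le
    have hbad := le_trans (JansonAux.rProb_mono' n k hp0 hp1 himp) hJ
    have hexp : Real.exp (-(((𝓕.card:ℝ)*p^f/2)^2/(2*Δ))) ≤ Real.exp (-(n:ℝ)) := by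
      apply Real.exp_le_exp.2
      rw [neg_le_neg_iff, le_div_iff₀ (by positivity : (0:ℝ) < 2*Δ)]
      have hΔle : Δ * (c * n) ≤ (𝓕.card:ℝ) * C₀ * (n:ℝ)^b * p^(2*f) := by
        calc Δ * (c * n) ≤ Δ * Phi (Finset.univ : Finset (Fin b)) F n p :=
              mul_le_mul_of_nonneg_left hPhi hΔpos.le
          _ ≤ (𝓕.card : ℝ) * (2:ℝ)^f * ((f*k : ℕ):ℝ)^b * (n:ℝ)^b * p^(2*f) := hΔbound
          _ = (𝓕.card:ℝ) * C₀ * (n:ℝ)^b * p^(2*f) := by rw [hC₀def]; ring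
      have hGc : 8*C₀*(n:ℝ)^b ≤ c * (𝓕.card:ℝ) := by
        have hc1 : 8*C₀/lam ≤ c := by
          rw [hcdef]
          have h2 : 0 < 4*C₀*(2/lam)^b := by positivity
          linarith
        calc 8*C₀*(n:ℝ)^b = (8*C₀/lam) * (lam * (n:ℝ)^b) := by field_simp
          _ ≤ c * (lam * (n:ℝ)^b) := by
              apply mul_le_mul_of_nonneg_right hc1
              positivity
          _ = c * (𝓕.card:ℝ) := by rw [h𝓕card]
      have ht2 : ((𝓕.card:ℝ)*p^f/2)^2 = (𝓕.card:ℝ)^2 * p^(2*f)/4 := by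
        rw [div_pow, mul_pow, ← pow_mul, mul_comm f 2]
        norm_num
      rw [ht2]
      have hfinal : (n:ℝ)*(2*Δ)*c*4 ≤ c * ((𝓕.card:ℝ)^2 * p^(2*f)) := by
        calc (n:ℝ)*(2*Δ)*c*4 = 8*(Δ*(c*n)) := by ring
          _ ≤ 8*((𝓕.card:ℝ) * C₀ * (n:ℝ)^b * p^(2*f)) := by linarith [hΔle]
          _ = (8*C₀*(n:ℝ)^b) * ((𝓕.card:ℝ) * p^(2*f)) := by ring
          _ ≤ (c * (𝓕.card:ℝ)) * ((𝓕.card:ℝ) * p^(2*f)) := by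
              apply mul_le_mul_of_nonneg_right hGc
              positivity
          _ = c * ((𝓕.card:ℝ)^2 * p^(2*f)) := by ring
      nlinarith [hfinal, hcpos]
    have hbad2 : rProb n k p (fun E => ¬ (lam / 2 * (n:ℝ)^b * p^f ≤ (countSpan F 𝓕 E : ℝ)))
        ≤ Real.exp (-(n:ℝ)) := le_trans hbad hexp
    have hcompl := JansonAux.rProb_add_compl n k p
      (fun E => lam / 2 * (n:ℝ)^b * p^f ≤ (countSpan F 𝓕 E : ℝ))
    linarith [hbad2, hcompl]
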